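/- arXiv:1902.06633 — 6 statements merged into one kernel-verified Lean document; each statement's English description precedes it below -/
import Mathlib

section
/- Let G=(V,E) be a finite simple graph with boundary set ∂V ⊆ V such that every diagonal entry of D is strictly positive and such that vol(S) > 0 for every nonempty S ⊆ V. Then the first nontrivial eigenvalue λ_R of the normalized reflected Neumann graph Laplacian 𝓛_R and the Cheeger constant h_R satisfy √(2·λ_R) ≥ h_R ≥ λ_R/2. -/
open Matrix Finset
set_option linter.unusedSectionVars false
set_option linter.unusedVariables false
set_option linter.unnecessarySeqFocus false
set_option maxHeartbeats 1000000

namespace RN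

variable {V : Type*}

/-- The adjacency matrix of `G` with real entries. -/
noncomputable def adjMat [Fintype V] [DecidableEq V] (G : SimpleGraph V) [DecidableRel G.Adj] :
    Matrix V V ℝ :=
  Matrix.of fun u v => if G.Adj u v then 1 else 0

/-- The reflected adjacency matrix `R = [[A₁₁, A₁₂],[2A₁₂ᵀ, A₂₂]]`, where the first block is
indexed by the interior vertices and the second block by the boundary vertices `B`. -/
noncomputable def reflAdj [Fintype V] [DecidableEq V] (G : SimpleGraph V) [DecidableRel G.Adj]
    (B : Finset V) : Matrix V V ℝ :=
  Matrix.of fun u v => (if u ∈ B ∧ v ∉ B then 2 else 1) * adjMat G u v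

/-- The diagonal entries of `D = diag(R·1)`. -/
noncomputable def deg [Fintype V] [DecidableEq V] (G : SimpleGraph V) [DecidableRel G.Adj]
    (B : Finset V) (v : V) : ℝ :=
  ∑ w, reflAdj G B v w

/-- `D = diag(R·1)`. -/
noncomputable def Dmat [Fintype V] [DecidableEq V] (G : SimpleGraph V) [DecidableRel G.Adj]
    (B : Finset V) : Matrix V V ℝ :=
  Matrix.diagonal (deg G B)

/-- The reflected Neumann Laplacian `L_R = D - R`. -/
noncomputable def LR [Fintype V] [DecidableEq V] (G : SimpleGraph V) [DecidableRel G.Adj]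
    (B : Finset V) : Matrix V V ℝ :=
  Dmat G B - reflAdj G B

/-- The weight `q_v`, which is `1` on interior vertices and `1/2` on boundary vertices. -/
noncomputable def qw [DecidableEq V] (B : Finset V) (v : V) : ℝ := if v ∈ B then 1/2 else 1

/-- The diagonal matrix `Q` with entries `1` on the interior and `1/2` on the boundary. -/
noncomputable def Qmat [Fintype V] [DecidableEq V] (B : Finset V) : Matrix V V ℝ :=
  Matrix.diagonal (qw B)

/-- `D^{1/2}`. -/
noncomputable def Dhalf [Fintype V] [DecidableEq V] (G : SimpleGraph V) [DecidableRel G.Adj]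
    (B : Finset V) : Matrix V V ℝ :=
  Matrix.diagonal fun v => Real.sqrt (deg G B v)

/-- `D^{-1/2}`. -/
noncomputable def Dinvhalf [Fintype V] [DecidableEq V] (G : SimpleGraph V) [DecidableRel G.Adj]
    (B : Finset V) : Matrix V V ℝ :=
  Matrix.diagonal fun v => (Real.sqrt (deg G B v))⁻¹

/-- The normalized reflected Neumann Laplacian `𝓛_R = D^{-1/2} L_R D^{-1/2}`. -/
noncomputable def NLR [Fintype V] [DecidableEq V] (G : SimpleGraph V) [DecidableRel G.Adj]
    (B : Finset V) : Matrix V V ℝ :=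
  Dinvhalf G B * LR G B * Dinvhalf G B

/-- `Q^{1/2}`. -/
noncomputable def Qhalf [Fintype V] [DecidableEq V] (B : Finset V) : Matrix V V ℝ :=
  Matrix.diagonal fun v => Real.sqrt (qw B v)

/-- `Q^{-1/2}`. -/
noncomputable def Qinvhalf [Fintype V] [DecidableEq V] (B : Finset V) : Matrix V V ℝ :=
  Matrix.diagonal fun v => (Real.sqrt (qw B v))⁻¹

/-- The first nontrivial eigenvalue `λ_R` of `𝓛_R`: the infimum of the Rayleigh quotients
`xᵀ (Q^{1/2} 𝓛_R Q^{-1/2}) x / xᵀx` over nonzero `x` with `xᵀ D^{1/2} Q^{1/2} 1 = 0`. -/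
noncomputable def lambdaR [Fintype V] [DecidableEq V] (G : SimpleGraph V) [DecidableRel G.Adj]
    (B : Finset V) : ℝ :=
  sInf {r : ℝ | ∃ x : V → ℝ, x ≠ 0 ∧
    x ⬝ᵥ ((Dhalf G B * Qhalf B) *ᵥ fun _ => 1) = 0 ∧
    r = x ⬝ᵥ ((Qhalf B * NLR G B * Qinvhalf B) *ᵥ x) / (x ⬝ᵥ x)}

/-- `|E(U,W)|`: the number of edges of `G` with one endpoint in `U` and one in `W`. -/
def ecount [Fintype V] [DecidableEq V] (G : SimpleGraph V) [DecidableRel G.Adj]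
    (U W : Finset V) : ℕ :=
  (G.edgeFinset.filter fun e => ∃ u ∈ U, ∃ w ∈ W, e = s(u, w)).card

/-- The measure `m(U,W) = |E(U,W)| - (1/2)|E(U ∩ ∂V, W ∩ ∂V)|`, where `B = ∂V`. -/
noncomputable def mMeas [Fintype V] [DecidableEq V] (G : SimpleGraph V) [DecidableRel G.Adj]
    (B : Finset V) (U W : Finset V) : ℝ :=
  (ecount G U W : ℝ) - (1/2) * (ecount G (U ∩ B) (W ∩ B) : ℝ)

/-- The volume `vol(U) = Σ_{u ∈ U} m({u}, V)`. -/
noncomputable def vol [Fintype V] [DecidableEq V] (G : SimpleGraph V) [DecidableRel G.Adj]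
    (B : Finset V) (U : Finset V) : ℝ :=
  ∑ u ∈ U, mMeas G B {u} Finset.univ

/-- The Cheeger constant `h_R`: the infimum over nonempty proper subsets `S ⊆ V` of
`m(S, V∖S) / min(vol S, vol (V∖S))`. -/
noncomputable def cheegerR [Fintype V] [DecidableEq V] (G : SimpleGraph V) [DecidableRel G.Adj]
    (B : Finset V) : ℝ :=
  sInf {r : ℝ | ∃ S : Finset V, S.Nonempty ∧ S ≠ Finset.univ ∧
    r = mMeas G B S Sᶜ / min (vol G B S) (vol G B Sᶜ)}

end RN


open RN

namespace RNProof

variable {V : Type*} [Fintype V] [DecidableEq V]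

noncomputable section
def muW (c : V → V → ℝ) (v : V) : ℝ := ∑ w, c v w
def volW (c : V → V → ℝ) (S : Finset V) : ℝ := ∑ v ∈ S, muW c v
def cutW (c : V → V → ℝ) (S : Finset V) : ℝ := ∑ v ∈ S, ∑ w ∈ Sᶜ, c v w
def enW (c : V → V → ℝ) (u : V → ℝ) : ℝ := (1/2) * ∑ v, ∑ w, c v w * (u v - u w)^2
def dnW (c : V → V → ℝ) (u : V → ℝ) : ℝ := ∑ v, muW c v * u v ^ 2
structure Wgt (c : V → V → ℝ) : Prop where
  symm : ∀ v w, c v w = c w v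
  nn : ∀ v w, 0 ≤ c v w
  pos : ∀ v, 0 < muW c v
  loopless : ∀ v, c v v = 0
end

variable {c : V → V → ℝ}

lemma volW_nonneg (hw : Wgt c) (S : Finset V) : 0 ≤ volW c S :=
  Finset.sum_nonneg fun v _ => (hw.pos v).le

lemma volW_pos (hw : Wgt c) {S : Finset V} (hS : S.Nonempty) : 0 < volW c S := by
  obtain ⟨v, hv⟩ := hS
  exact Finset.sum_pos' (fun v _ => (hw.pos v).le) ⟨v, hv, hw.pos v⟩

lemma volW_mono (hw : Wgt c) {S T : Finset V} (h : S ⊆ T) : volW c S ≤ volW c T :=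
  Finset.sum_le_sum_of_subset_of_nonneg h fun v _ _ => (hw.pos v).le

lemma volW_add_compl (S : Finset V) : volW c S + volW c Sᶜ = volW c univ := by
  simpa [volW] using Finset.sum_add_sum_compl S (muW c)

lemma cutW_nonneg (hw : Wgt c) (S : Finset V) : 0 ≤ cutW c S :=
  Finset.sum_nonneg fun v _ => Finset.sum_nonneg fun w _ => hw.nn v w

lemma enW_nonneg (hw : Wgt c) (u : V → ℝ) : 0 ≤ enW c u := by
  apply mul_nonneg (by norm_num)
  exact Finset.sum_nonneg fun v _ => Finset.sum_nonneg fun w _ =>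
    mul_nonneg (hw.nn v w) (sq_nonneg _)

lemma dnW_nonneg (hw : Wgt c) (u : V → ℝ) : 0 ≤ dnW c u :=
  Finset.sum_nonneg fun v _ => mul_nonneg (hw.pos v).le (sq_nonneg _)

lemma dnW_pos (hw : Wgt c) {u : V → ℝ} (hu : u ≠ 0) : 0 < dnW c u := by
  obtain ⟨v, hv⟩ : ∃ v, u v ≠ 0 := by
    by_contra h
    push_neg at h
    exact hu (funext fun v => h v)
  exact Finset.sum_pos' (fun v _ => mul_nonneg (hw.pos v).le (sq_nonneg _))
    ⟨v, mem_univ v, mul_pos (hw.pos v) (by positivity)⟩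

lemma telescope (f : ℕ → ℝ) {a b : ℕ} (h : a ≤ b) :
    ∑ j ∈ Finset.Ico a b, (f j - f (j+1)) = f a - f b := by
  induction b, h using Nat.le_induction with
  | base => simp
  | succ b hb ih => rw [Finset.sum_Ico_succ_top hb, ih]; ring

lemma half_sum (ι : V → ℕ) (hι : Function.Injective ι) (F : V → V → ℝ)
    (hsymm : ∀ v w, F v w = F w v) (hdiag : ∀ v, F v v = 0) :
    ∑ v, ∑ w, (if ι v < ι w then F v w else 0) = (1/2) * ∑ v, ∑ w, F v w := by
  have key : ∀ v w, (if ι v < ι w then F v w else 0) + (if ι w < ι v then F v w else 0)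
      = F v w := by
    intro v w
    rcases lt_trichotomy (ι v) (ι w) with h | h | h
    · rw [if_pos h, if_neg (by omega), add_zero]
    · have hvw : v = w := hι h
      subst hvw; simp [hdiag]
    · rw [if_neg (by omega), if_pos h, zero_add]
  have swap : ∑ v, ∑ w, (if ι w < ι v then F v w else 0)
      = ∑ v, ∑ w, (if ι v < ι w then F v w else 0) := by
    rw [Finset.sum_comm]
    exact Finset.sum_congr rfl fun v _ => Finset.sum_congr rfl fun w _ => by rw [hsymm]
  have total : ∑ v, ∑ w, F v w
      = ∑ v, ∑ w, ((if ι v < ι w then F v w else 0) + (if ι w < ι v then F v w else 0)) :=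
    Finset.sum_congr rfl fun v _ => Finset.sum_congr rfl fun w _ => (key v w).symm
  rw [total]
  simp only [Finset.sum_add_distrib]
  rw [swap]; ring

lemma filter_le_add_filter_gt (c : V → V → ℝ) (u : V → ℝ) (m : ℝ) :
    volW c (univ.filter fun v => u v ≤ m) + volW c (univ.filter fun v => m < u v)
      = volW c univ := by
  rw [volW, volW, volW]
  simpa using Finset.sum_filter_add_sum_filter_not univ (fun v => u v ≤ m) (muW c)

lemma exists_median {c : V → V → ℝ} (hw : Wgt c) [Nonempty V] (u : V → ℝ) :
    ∃ m : ℝ, volW c (univ.filter fun v => m < u v) ≤ volW c univ / 2 ∧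
      volW c (univ.filter fun v => u v < m) ≤ volW c univ / 2 := by
  classical
  set T : Finset ℝ := univ.image u with hT
  have hTne : T.Nonempty := (univ_nonempty).image u
  set cand : Finset ℝ :=
    T.filter (fun t => volW c univ / 2 ≤ volW c (univ.filter fun v => u v ≤ t)) with hcand
  have hcandne : cand.Nonempty := by
    refine ⟨T.max' hTne, mem_filter.2 ⟨T.max'_mem hTne, ?_⟩⟩
    have : (univ.filter fun v => u v ≤ T.max' hTne) = univ := by
      apply Finset.filter_true_of_mem
      intro v _
      exact T.le_max' (u v) (mem_image_of_mem u (mem_univ v))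
    rw [this]
    have h0 : 0 ≤ volW c univ := volW_nonneg hw _
    linarith
  set m : ℝ := cand.min' hcandne with hm
  have hmmem : m ∈ cand := cand.min'_mem hcandne
  have hm2 := (mem_filter.1 hmmem).2
  refine ⟨m, ?_, ?_⟩
  · have := filter_le_add_filter_gt c u m
    linarith
  · set T' : Finset ℝ := T.filter (· < m) with hT'
    by_cases hT'ne : T'.Nonempty
    · set t' : ℝ := T'.max' hT'ne with ht'
      have ht'mem := T'.max'_mem hT'ne
      have ht'lt : t' < m := (mem_filter.1 ht'mem).2
      have hset : (univ.filter fun v => u v < m) = (univ.filter fun v => u v ≤ t') := by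
        apply Finset.filter_congr
        intro v _
        constructor
        · intro h
          exact T'.le_max' (u v) (mem_filter.2 ⟨mem_image_of_mem u (mem_univ v), by simpa using h⟩)
        · intro h; simpa using lt_of_le_of_lt h ht'lt
      rw [hset]
      by_contra hcon
      push_neg at hcon
      have : t' ∈ cand := mem_filter.2 ⟨(mem_filter.1 ht'mem).1, hcon.le⟩
      exact absurd (cand.min'_le t' this) (not_le.2 ht'lt)
    · have : (univ.filter fun v => u v < m) = ∅ := by
        rw [Finset.filter_eq_empty_iff]
        intro v _ hv
        exact hT'ne ⟨u v, mem_filter.2 ⟨mem_image_of_mem u (mem_univ v), by simpa using hv⟩⟩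
      have he : volW c (∅ : Finset V) = 0 := by simp [volW]
      rw [this, he]
      have h0 : 0 ≤ volW c univ := volW_nonneg hw _
      linarith


lemma sqrt_helper (E D : ℝ) (hE : 0 ≤ E) (hD : 0 < D) :
    Real.sqrt (E * (2 * D)) = Real.sqrt (2 * (E / D)) * D := by
  have h : Real.sqrt (2 * (E / D)) * D = Real.sqrt (2 * (E / D) * D ^ 2) := by
    rw [Real.sqrt_mul (show (0:ℝ) ≤ 2 * (E / D) by positivity) (D ^ 2), Real.sqrt_sq hD.le]
  rw [h]
  congr 1
  field_simp

lemma sweep (hw : Wgt c) (g : V → ℝ) (hgnn : ∀ v, 0 ≤ g v) (hg0 : g ≠ 0) :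
    ∃ S : Finset V, S.Nonempty ∧ S ⊆ univ.filter (fun v => g v ≠ 0) ∧
      cutW c S ≤ Real.sqrt (2 * (enW c g / dnW c g)) * volW c S := by
  classical
  set n := Fintype.card V with hn
  obtain ⟨e, hsorted⟩ : ∃ e : Fin n ≃ V, ∀ i j : Fin n, i ≤ j → g (e j)^2 ≤ g (e i)^2 := by
    set e0 : Fin n ≃ V := (Fintype.equivFin V).symm with he0
    set w : Fin n → ℝ := fun i => -(g (e0 i))^2 with hwdef
    refine ⟨(Tuple.sort w).trans e0, fun i j hij => ?_⟩
    have h := Tuple.monotone_sort w hij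
    simp only [Function.comp_apply, hwdef] at h
    simp only [Equiv.trans_apply]
    have h2 : -(g (e0 ((Tuple.sort w) i)))^2 ≤ -(g (e0 ((Tuple.sort w) j)))^2 := h
    linarith
  set t' : ℕ → ℝ := fun j => if h : j < n then g (e ⟨j, h⟩)^2 else 0 with ht'
  have ht'nn : ∀ j, 0 ≤ t' j := by
    intro j; rw [ht']; dsimp only; split
    · exact sq_nonneg _
    · exact le_refl 0
  have ht'anti : ∀ {j k : ℕ}, j ≤ k → t' k ≤ t' j := by
    intro j k hjk
    by_cases hk : k < n
    · have hj : j < n := lt_of_le_of_lt hjk hk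
      simp only [ht', dif_pos hk, dif_pos hj]
      exact hsorted ⟨j, hj⟩ ⟨k, hk⟩ hjk
    · simp only [ht', dif_neg hk]
      exact ht'nn j
  have ht'n : t' n = 0 := dif_neg (lt_irrefl n)
  set idx : V → ℕ := fun v => (e.symm v : ℕ) with hidxdef
  have hidxlt : ∀ v, idx v < n := fun v => (e.symm v).isLt
  have hidx_inj : Function.Injective idx := by
    intro v w h
    have : e.symm v = e.symm w := Fin.ext h
    exact e.symm.injective this
  have ht'idx : ∀ v, t' (idx v) = g v ^ 2 := by
    intro v
    simp only [ht', hidxdef, dif_pos (e.symm v).isLt]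
    congr 1
    have h1 : (⟨((e.symm v : Fin n) : ℕ), (e.symm v).isLt⟩ : Fin n) = e.symm v := by
      apply Fin.ext; rfl
    rw [h1, Equiv.apply_symm_apply]
  have hidx_e : ∀ (j : Fin n), idx (e j) = (j : ℕ) := by
    intro j; simp only [hidxdef, Equiv.symm_apply_apply]
  set P : ℕ → Finset V := fun j => univ.filter fun v => idx v < j with hPdef
  have hmemP : ∀ v j, v ∈ P j ↔ idx v < j := by intro v j; simp [hPdef]
  have hD : 0 < dnW c g := dnW_pos hw hg0
  -- Abel identity for the denominator
  have I1 : ∑ j ∈ range n, (t' j - t' (j+1)) * volW c (P (j+1)) = dnW c g := by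
    have step : ∀ j ∈ range n, (t' j - t' (j+1)) * volW c (P (j+1))
        = ∑ v, (if idx v ≤ j then (t' j - t' (j+1)) * muW c v else 0) := by
      intro j _
      rw [show volW c (P (j+1)) = ∑ v, (if idx v < j+1 then muW c v else 0) by
        simp [hPdef, volW, Finset.sum_filter]]
      rw [Finset.mul_sum]
      apply Finset.sum_congr rfl
      intro v _
      rw [mul_ite, mul_zero]
      simp [Nat.lt_succ_iff]
    rw [Finset.sum_congr rfl step, Finset.sum_comm, dnW]
    apply Finset.sum_congr rfl
    intro v _
    rw [← Finset.sum_filter]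
    have hfe : (range n).filter (fun j => idx v ≤ j) = Finset.Ico (idx v) n := by
      ext j; simp [Finset.mem_Ico, Finset.mem_range, and_comm]
    rw [hfe, ← Finset.sum_mul, telescope t' (hidxlt v).le, ht'n, ht'idx v]
    ring
  -- Abel identity for the numerator
  set K := ∑ j ∈ range n, (t' j - t' (j+1)) * cutW c (P (j+1)) with hKdef
  have hcutP : ∀ j, cutW c (P j) = ∑ v, ∑ w, (if idx v < j ∧ ¬ idx w < j then c v w else 0) := by
    intro j
    rw [cutW]
    have hcompl : (P j)ᶜ = univ.filter (fun w => ¬ idx w < j) := by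
      simp [hPdef]
    rw [hcompl, hPdef]
    rw [Finset.sum_filter]
    apply Finset.sum_congr rfl
    intro v _
    by_cases hv : idx v < j
    · simp only [hv, if_true, true_and, Finset.sum_filter]
    · simp [hv]
  have I2 : K = ∑ v, ∑ w, (if idx v < idx w then c v w * (g v^2 - g w^2) else 0) := by
    rw [hKdef]
    have step : ∀ j ∈ range n, (t' j - t' (j+1)) * cutW c (P (j+1))
        = ∑ v, ∑ w, (if idx v ≤ j ∧ j < idx w then (t' j - t' (j+1)) * c v w else 0) := by
      intro j _
      rw [hcutP, Finset.mul_sum]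
      apply Finset.sum_congr rfl; intro v _
      rw [Finset.mul_sum]
      apply Finset.sum_congr rfl; intro w _
      rw [mul_ite, mul_zero]
      have : (idx v < j + 1 ∧ ¬idx w < j + 1) ↔ (idx v ≤ j ∧ j < idx w) := by omega
      simp only [this]
    rw [Finset.sum_congr rfl step]
    rw [Finset.sum_comm]
    apply Finset.sum_congr rfl; intro v _
    rw [Finset.sum_comm]
    apply Finset.sum_congr rfl; intro w _
    have hfe : (range n).filter (fun j => idx v ≤ j ∧ j < idx w) = Finset.Ico (idx v) (idx w) := by
      ext j
      simp only [Finset.mem_filter, Finset.mem_range, Finset.mem_Ico]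
      constructor
      · rintro ⟨_, h2, h3⟩; exact ⟨h2, h3⟩
      · rintro ⟨h2, h3⟩; exact ⟨lt_trans h3 (hidxlt w), h2, h3⟩
    rw [← Finset.sum_filter, hfe]
    by_cases hvw : idx v ≤ idx w
    · rw [← Finset.sum_mul, telescope t' hvw, ht'idx, ht'idx]
      rcases eq_or_lt_of_le hvw with heq | hlt
      · have : v = w := hidx_inj heq
        subst this
        simp
      · rw [if_pos hlt]; ring
    · rw [Finset.Ico_eq_empty (by omega), Finset.sum_empty, if_neg (by omega)]
  -- K is nonnegative
  have hKnn : 0 ≤ K := by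
    rw [I2]
    apply Finset.sum_nonneg; intro v _
    apply Finset.sum_nonneg; intro w _
    split
    · rename_i hlt
      have h1 : g w ^ 2 ≤ g v ^ 2 := by
        have := ht'anti (le_of_lt hlt)
        rwa [ht'idx, ht'idx] at this
      have := hw.nn v w
      nlinarith
    · exact le_refl 0
  -- Cauchy-Schwarz bound : K^2 ≤ enW c g * (2 * dnW c g)
  have hsum1 : ∑ v, ∑ w, c v w * g v ^ 2 = dnW c g := by
    rw [dnW]
    apply Finset.sum_congr rfl; intro v _
    rw [muW, Finset.sum_mul]
  have hsum2 : ∑ v, ∑ w, c v w * g w ^ 2 = dnW c g := by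
    rw [Finset.sum_comm, ← hsum1]
    apply Finset.sum_congr rfl; intro v _
    apply Finset.sum_congr rfl; intro w _
    rw [hw.symm v w]
  have hK2 : K ^ 2 ≤ enW c g * (2 * dnW c g) := by
    set a : V × V → ℝ := fun p =>
      if idx p.1 < idx p.2 then Real.sqrt (c p.1 p.2) * (g p.1 - g p.2) else 0 with hadef
    set b : V × V → ℝ := fun p =>
      if idx p.1 < idx p.2 then Real.sqrt (c p.1 p.2) * (g p.1 + g p.2) else 0 with hbdef
    have hKab : K = ∑ p : V × V, a p * b p := by
      rw [I2, Fintype.sum_prod_type]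
      apply Finset.sum_congr rfl; intro v _
      apply Finset.sum_congr rfl; intro w _
      simp only [hadef, hbdef]
      split
      · rw [show Real.sqrt (c v w) * (g v - g w) * (Real.sqrt (c v w) * (g v + g w))
            = (Real.sqrt (c v w) * Real.sqrt (c v w)) * ((g v - g w) * (g v + g w)) by ring,
          Real.mul_self_sqrt (hw.nn v w)]
        ring
      · ring
    have ha2 : ∑ p : V × V, a p ^ 2 = enW c g := by
      rw [Fintype.sum_prod_type]
      have : ∀ v w : V, a (v, w) ^ 2 = (if idx v < idx w then c v w * (g v - g w)^2 else 0) := by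
        intro v w
        simp only [hadef]
        split
        · rw [mul_pow, Real.sq_sqrt (hw.nn v w)]
        · exact zero_pow two_ne_zero
      simp only [this]
      rw [half_sum idx hidx_inj _ (fun v w => by rw [hw.symm v w]; ring) (fun v => by rw [hw.loopless]; ring), enW]
    have hb2 : ∑ p : V × V, b p ^ 2 ≤ 2 * dnW c g := by
      rw [Fintype.sum_prod_type]
      have hq : ∀ v w : V, b (v, w) ^ 2 = (if idx v < idx w then c v w * (g v + g w)^2 else 0) := by
        intro v w
        simp only [hbdef]
        split
        · rw [mul_pow, Real.sq_sqrt (hw.nn v w)]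
        · exact zero_pow two_ne_zero
      simp only [hq]
      rw [half_sum idx hidx_inj _ (fun v w => by rw [hw.symm v w]; ring) (fun v => by rw [hw.loopless]; ring)]
      have hpt : ∑ v, ∑ w, c v w * (g v + g w)^2
          ≤ ∑ v, ∑ w, (2 * (c v w * g v ^2) + 2 * (c v w * g w ^2)) := by
        apply Finset.sum_le_sum; intro v _
        apply Finset.sum_le_sum; intro w _
        have := hw.nn v w
        nlinarith [sq_nonneg (g v - g w)]
      have hsplit : ∑ v, ∑ w, (2 * (c v w * g v ^2) + 2 * (c v w * g w ^2))
          = 2 * dnW c g + 2 * dnW c g := by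
        simp only [Finset.sum_add_distrib, ← Finset.mul_sum, hsum1, hsum2]
      linarith
    calc K ^ 2 = (∑ p : V × V, a p * b p) ^ 2 := by rw [hKab]
      _ ≤ (∑ p : V × V, a p ^ 2) * (∑ p : V × V, b p ^ 2) :=
          Finset.sum_mul_sq_le_sq_mul_sq _ _ _
      _ ≤ enW c g * (2 * dnW c g) := by
          rw [ha2]
          exact mul_le_mul_of_nonneg_left hb2 (enW_nonneg hw g)
  set α := Real.sqrt (2 * (enW c g / dnW c g)) with hαdef
  have hαnn : 0 ≤ α := Real.sqrt_nonneg _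
  have hKb : K ≤ α * dnW c g := by
    have h1 : K ≤ Real.sqrt (enW c g * (2 * dnW c g)) := by
      rw [← Real.sqrt_sq hKnn]
      exact Real.sqrt_le_sqrt hK2
    have h2 : Real.sqrt (enW c g * (2 * dnW c g)) = α * dnW c g :=
      sqrt_helper _ _ (enW_nonneg hw g) hD
    rw [← h2]; exact h1
  -- selection of a good prefix by contradiction
  by_contra hcon
  push_neg at hcon
  have hprop : ∀ j ∈ range n, 0 < t' j - t' (j+1) →
      (P (j+1)).Nonempty ∧ P (j+1) ⊆ univ.filter (fun v => g v ≠ 0) := by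
    intro j hj hcoeff
    have hjn : j < n := Finset.mem_range.1 hj
    constructor
    · refine ⟨e ⟨j, hjn⟩, (hmemP _ _).2 ?_⟩
      rw [hidx_e]
      simp only [Fin.val_mk]
      omega
    · intro v hv
      rw [Finset.mem_filter]
      refine ⟨Finset.mem_univ v, ?_⟩
      have hvj : idx v ≤ j := Nat.lt_succ_iff.1 ((hmemP v (j+1)).1 hv)
      have h1 : t' j ≤ t' (idx v) := ht'anti hvj
      have h2 : t' (idx v) = g v ^ 2 := ht'idx v
      have h3 : 0 ≤ t' (j+1) := ht'nn (j+1)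
      intro hgv
      rw [hgv] at h2
      simp at h2
      linarith
  have hterm : ∀ j ∈ range n,
      (t' j - t' (j+1)) * (α * volW c (P (j+1))) ≤ (t' j - t' (j+1)) * cutW c (P (j+1)) := by
    intro j hj
    rcases (sub_nonneg.2 (ht'anti (Nat.le_succ j))).eq_or_lt with h | h
    · rw [← h, zero_mul, zero_mul]
    · obtain ⟨hne, hsub⟩ := hprop j hj h
      exact mul_le_mul_of_nonneg_left (hcon _ hne hsub).le h.le
  have hex : ∃ j ∈ range n, 0 < (t' j - t' (j+1)) * volW c (P (j+1)) := by
    by_contra hno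
    push_neg at hno
    have : dnW c g ≤ 0 := by
      rw [← I1]
      exact Finset.sum_nonpos hno
    linarith
  obtain ⟨j0, hj0mem, hj0⟩ := hex
  have hcoeff0 : 0 < t' j0 - t' (j0+1) := by
    rcases (sub_nonneg.2 (ht'anti (Nat.le_succ j0))).eq_or_lt with h | h
    · rw [← h, zero_mul] at hj0; linarith
    · exact h
  have hstrict : (t' j0 - t' (j0+1)) * (α * volW c (P (j0+1)))
      < (t' j0 - t' (j0+1)) * cutW c (P (j0+1)) := by
    obtain ⟨hne, hsub⟩ := hprop j0 hj0mem hcoeff0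
    exact (mul_lt_mul_iff_right₀ hcoeff0).2 (hcon _ hne hsub)
  have hsumlt : ∑ j ∈ range n, (t' j - t' (j+1)) * (α * volW c (P (j+1))) < K :=
    Finset.sum_lt_sum hterm ⟨j0, hj0mem, hstrict⟩
  have hsumeq : ∑ j ∈ range n, (t' j - t' (j+1)) * (α * volW c (P (j+1))) = α * dnW c g := by
    rw [← I1, Finset.mul_sum]
    apply Finset.sum_congr rfl
    intro j _
    ring
  rw [hsumeq] at hsumlt
  linarith


lemma part_sq (a b : ℝ) :
    (max a 0 - max b 0)^2 + (max (-a) 0 - max (-b) 0)^2 ≤ (a - b)^2 := by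
  rcases le_or_gt a 0 with ha | ha <;> rcases le_or_gt b 0 with hb | hb
  · rw [max_eq_right ha, max_eq_right hb, max_eq_left (by linarith), max_eq_left (by linarith)]
    nlinarith
  · rw [max_eq_right ha, max_eq_left hb.le, max_eq_left (by linarith), max_eq_right (by linarith)]
    nlinarith [mul_nonneg (neg_nonneg.2 ha) hb.le]
  · rw [max_eq_left ha.le, max_eq_right hb, max_eq_right (by linarith), max_eq_left (by linarith)]
    nlinarith [mul_nonneg ha.le (neg_nonneg.2 hb)]
  · rw [max_eq_left ha.le, max_eq_left hb.le, max_eq_right (by linarith), max_eq_right (by linarith)]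
    nlinarith

lemma enW_zero : enW c (0 : V → ℝ) = 0 := by simp [enW]

lemma dnW_zero : dnW c (0 : V → ℝ) = 0 := by simp [dnW]

lemma exists_part (hw : Wgt c) {f : V → ℝ} (hf : f ≠ 0) :
    ∃ g : V → ℝ, g ≠ 0 ∧ (∀ v, 0 ≤ g v) ∧
      ((univ.filter fun v => g v ≠ 0) = (univ.filter fun v => 0 < f v) ∨
       (univ.filter fun v => g v ≠ 0) = (univ.filter fun v => f v < 0)) ∧
      enW c g * dnW c f ≤ enW c f * dnW c g := by
  classical
  set fp : V → ℝ := fun v => max (f v) 0 with hfp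
  set fm : V → ℝ := fun v => max (-f v) 0 with hfm
  have hfpnn : ∀ v, 0 ≤ fp v := fun v => le_max_right _ _
  have hfmnn : ∀ v, 0 ≤ fm v := fun v => le_max_right _ _
  have hsupp_p : (univ.filter fun v => fp v ≠ 0) = (univ.filter fun v => 0 < f v) := by
    apply Finset.filter_congr
    intro v _
    simp only [hfp, ne_eq]
    constructor
    · intro h
      by_contra hle
      push_neg at hle
      exact h (max_eq_right hle)
    · intro h h2
      rw [max_eq_left h.le] at h2
      exact absurd h2 (ne_of_gt h)
  have hsupp_m : (univ.filter fun v => fm v ≠ 0) = (univ.filter fun v => f v < 0) := by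
    apply Finset.filter_congr
    intro v _
    simp only [hfm, ne_eq]
    constructor
    · intro h
      by_contra hle
      push_neg at hle
      exact h (max_eq_right (by linarith))
    · intro h h2
      rw [max_eq_left (by linarith)] at h2
      have : f v = 0 := by linarith [neg_eq_zero.1 h2]
      exact absurd this (ne_of_lt h)
  have hsq : ∀ v, fp v ^ 2 + fm v ^ 2 = f v ^ 2 := by
    intro v
    simp only [hfp, hfm]
    rcases le_or_gt (f v) 0 with h | h
    · rw [max_eq_right h, max_eq_left (by linarith)]; ring
    · rw [max_eq_left h.le, max_eq_right (by linarith)]; ring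
  have hfpm : ∀ v, f v = fp v - fm v := by
    intro v
    simp only [hfp, hfm]
    rcases le_or_gt (f v) 0 with h | h
    · rw [max_eq_right h, max_eq_left (by linarith)]; ring
    · rw [max_eq_left h.le, max_eq_right (by linarith)]; ring
  have hdn : dnW c fp + dnW c fm = dnW c f := by
    rw [dnW, dnW, dnW, ← Finset.sum_add_distrib]
    exact Finset.sum_congr rfl fun v _ => by linear_combination (muW c v) * (hsq v)
  have hen : enW c fp + enW c fm ≤ enW c f := by
    rw [enW, enW, enW]
    rw [show (1:ℝ)/2 * ∑ v, ∑ w, c v w * (fp v - fp w)^2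
        + 1/2 * ∑ v, ∑ w, c v w * (fm v - fm w)^2
        = 1/2 * ∑ v, ∑ w, (c v w * (fp v - fp w)^2 + c v w * (fm v - fm w)^2) by
      simp only [Finset.sum_add_distrib]; ring]
    have hpt : ∀ v w : V, c v w * (fp v - fp w)^2 + c v w * (fm v - fm w)^2
        ≤ c v w * (f v - f w)^2 := by
      intro v w
      have h1 : (fp v - fp w)^2 + (fm v - fm w)^2 ≤ (f v - f w)^2 := by
        simp only [hfp, hfm]
        exact part_sq (f v) (f w)
      nlinarith [hw.nn v w]
    have : ∑ v, ∑ w, (c v w * (fp v - fp w)^2 + c v w * (fm v - fm w)^2)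
        ≤ ∑ v, ∑ w, c v w * (f v - f w)^2 :=
      Finset.sum_le_sum fun v _ => Finset.sum_le_sum fun w _ => hpt v w
    linarith
  by_cases hp0 : fp = 0
  · have hm0 : fm ≠ 0 := by
      intro h
      apply hf
      funext v
      have := hfpm v
      rw [hp0, h] at this
      simpa using this
    refine ⟨fm, hm0, hfmnn, Or.inr hsupp_m, ?_⟩
    rw [hp0] at hen hdn
    rw [enW_zero, zero_add] at hen
    rw [dnW_zero, zero_add] at hdn
    rw [hdn]
    exact mul_le_mul_of_nonneg_right hen (dnW_nonneg hw f)
  · by_cases hm0 : fm = 0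
    · refine ⟨fp, hp0, hfpnn, Or.inl hsupp_p, ?_⟩
      rw [hm0] at hen hdn
      rw [enW_zero, add_zero] at hen
      rw [dnW_zero, add_zero] at hdn
      rw [hdn]
      exact mul_le_mul_of_nonneg_right hen (dnW_nonneg hw f)
    · by_cases hq : enW c fp * dnW c f ≤ enW c f * dnW c fp
      · exact ⟨fp, hp0, hfpnn, Or.inl hsupp_p, hq⟩
      · refine ⟨fm, hm0, hfmnn, Or.inr hsupp_m, ?_⟩
        push_neg at hq
        by_contra hq2
        push_neg at hq2
        have hDnn : 0 ≤ dnW c f := dnW_nonneg hw f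
        have h1 : (enW c fp + enW c fm) * dnW c f ≤ enW c f * dnW c f :=
          mul_le_mul_of_nonneg_right hen hDnn
        have h2 : enW c f * dnW c fp + enW c f * dnW c fm = enW c f * dnW c f := by
          rw [← mul_add, hdn]
        rw [add_mul] at h1
        linarith

lemma abstract_hard (hw : Wgt c) {u : V → ℝ} (hu : u ≠ 0)
    (horth : ∑ v, muW c v * u v = 0) :
    ∃ S : Finset V, S.Nonempty ∧ S ≠ univ ∧
      cutW c S / min (volW c S) (volW c Sᶜ) ≤ Real.sqrt (2 * (enW c u / dnW c u)) := by
  classical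
  obtain ⟨v0, hv0⟩ : ∃ v, u v ≠ 0 := by
    by_contra h
    push_neg at h
    exact hu (funext fun v => h v)
  haveI : Nonempty V := ⟨v0⟩
  have hvolV : 0 < volW c univ := volW_pos hw univ_nonempty
  obtain ⟨m, hmed1, hmed2⟩ := exists_median hw u
  set f : V → ℝ := fun v => u v - m with hfdef
  have hf0 : f ≠ 0 := by
    intro h
    have hm : ∀ v, u v = m := by
      intro v
      have := congrFun h v
      simp only [hfdef, Pi.zero_apply] at this
      linarith
    have hsum : ∑ v, muW c v * u v = (∑ v, muW c v) * m := by
      rw [Finset.sum_mul]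
      exact Finset.sum_congr rfl fun v _ => by rw [hm v]
    have hvol : volW c univ = ∑ v, muW c v := rfl
    rw [horth] at hsum
    have hm0 : m = 0 := by
      rcases mul_eq_zero.1 hsum.symm with h' | h'
      · rw [hvol, h'] at hvolV; linarith
      · exact h'
    apply hu
    funext v
    rw [hm v, hm0]
    simp
  have hen_f : enW c f = enW c u := by
    rw [enW, enW]
    congr 1
    apply Finset.sum_congr rfl; intro v _
    apply Finset.sum_congr rfl; intro w _
    simp only [hfdef]
    ring
  have hdn_f : dnW c u ≤ dnW c f := by
    have hcalc : dnW c f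
        = dnW c u - 2*m*(∑ v, muW c v * u v) + m^2 * volW c univ := by
      rw [dnW, dnW, volW]
      rw [show (∑ v, muW c v * u v ^2) - 2*m*(∑ v, muW c v * u v) + m^2 * ∑ v ∈ univ, muW c v
          = ∑ v, (muW c v * u v^2 - 2*m*(muW c v * u v) + m^2 * muW c v) by
        rw [Finset.sum_add_distrib, Finset.sum_sub_distrib, ← Finset.mul_sum, ← Finset.mul_sum]]
      apply Finset.sum_congr rfl; intro v _
      simp only [hfdef]
      ring
    rw [hcalc, horth]
    nlinarith [sq_nonneg m, hvolV]
  have hd_u : 0 < dnW c u := dnW_pos hw hu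
  have hd_f : 0 < dnW c f := dnW_pos hw hf0
  obtain ⟨g, hg0, hgnn, hgsupp, hgquot⟩ := exists_part hw hf0
  have hd_g : 0 < dnW c g := dnW_pos hw hg0
  have hsupvol : volW c (univ.filter fun v => g v ≠ 0) ≤ volW c univ / 2 := by
    rcases hgsupp with h | h
    · rw [h]
      have : (univ.filter fun v => 0 < f v) = (univ.filter fun v => m < u v) := by
        apply Finset.filter_congr; intro v _
        simp only [hfdef]
        constructor
        · intro hh; linarith
        · intro hh; linarith
      rw [this]; exact hmed1
    · rw [h]
      have : (univ.filter fun v => f v < 0) = (univ.filter fun v => u v < m) := by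
        apply Finset.filter_congr; intro v _
        simp only [hfdef]
        constructor
        · intro hh; linarith
        · intro hh; linarith
      rw [this]; exact hmed2
  obtain ⟨S, hSne, hSsub, hScut⟩ := sweep hw g hgnn hg0
  have hvolS : 0 < volW c S := volW_pos hw hSne
  have hvolS_half : volW c S ≤ volW c univ / 2 :=
    le_trans (volW_mono hw hSsub) hsupvol
  have hSuniv : S ≠ univ := by
    intro h
    rw [h] at hvolS_half
    linarith
  have hvolSc : volW c S ≤ volW c Sᶜ := by
    have := volW_add_compl (c := c) S
    linarith
  have hmin : min (volW c S) (volW c Sᶜ) = volW c S := min_eq_left hvolSc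
  refine ⟨S, hSne, hSuniv, ?_⟩
  rw [hmin]
  rw [div_le_iff₀ hvolS]
  calc cutW c S ≤ Real.sqrt (2 * (enW c g / dnW c g)) * volW c S := hScut
    _ ≤ Real.sqrt (2 * (enW c u / dnW c u)) * volW c S := by
        apply mul_le_mul_of_nonneg_right _ hvolS.le
        apply Real.sqrt_le_sqrt
        have q1 : enW c g / dnW c g ≤ enW c f / dnW c f :=
          (div_le_div_iff₀ hd_g hd_f).2 hgquot
        have q2 : enW c f / dnW c f ≤ enW c u / dnW c u := by
          rw [hen_f]
          apply div_le_div_of_nonneg_left (enW_nonneg hw u) hd_u hdn_f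
        linarith

lemma cutW_eq_sum (c : V → V → ℝ) (S : Finset V) :
    cutW c S = ∑ v, ∑ w, (if v ∈ S ∧ w ∈ Sᶜ then c v w else 0) := by
  rw [cutW]
  rw [show (∑ v ∈ S, ∑ w ∈ Sᶜ, c v w) = ∑ v, (if v ∈ S then ∑ w ∈ Sᶜ, c v w else 0) by
    rw [Finset.sum_ite_mem, Finset.univ_inter]]
  apply Finset.sum_congr rfl
  intro v _
  by_cases hv : v ∈ S
  · rw [if_pos hv]
    rw [show (∑ w ∈ Sᶜ, c v w) = ∑ w, (if w ∈ Sᶜ then c v w else 0) by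
      rw [Finset.sum_ite_mem, Finset.univ_inter]]
    exact Finset.sum_congr rfl fun w _ => by simp [hv]
  · rw [if_neg hv]
    symm
    exact Finset.sum_eq_zero fun w _ => by simp [hv]

lemma cutW_eq_sum' (hw : Wgt c) (S : Finset V) :
    ∑ v, ∑ w, (if w ∈ S ∧ v ∈ Sᶜ then c v w else 0) = cutW c S := by
  rw [Finset.sum_comm, cutW_eq_sum c S]
  apply Finset.sum_congr rfl; intro v _
  apply Finset.sum_congr rfl; intro w _
  rw [hw.symm]

lemma abstract_easy (hw : Wgt c) {S : Finset V} (hS : S.Nonempty) (hSc : Sᶜ.Nonempty) :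
    ∃ u : V → ℝ, u ≠ 0 ∧ (∑ v, muW c v * u v = 0) ∧
      enW c u / dnW c u ≤ 2 * (cutW c S / min (volW c S) (volW c Sᶜ)) := by
  classical
  set a := volW c S with hadef
  set b := volW c Sᶜ with hbdef
  have ha : 0 < a := volW_pos hw hS
  have hb : 0 < b := volW_pos hw hSc
  set u : V → ℝ := fun v => if v ∈ S then a⁻¹ else -b⁻¹ with hudef
  have hune : u ≠ 0 := by
    obtain ⟨v, hv⟩ := hS
    intro h
    have h2 := congrFun h v
    simp only [hudef, if_pos hv, Pi.zero_apply] at h2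
    exact absurd h2 (ne_of_gt (inv_pos.2 ha))
  have hsS : ∑ v ∈ S, muW c v * u v = 1 := by
    have hpt : ∀ v ∈ S, muW c v * u v = muW c v * a⁻¹ := by
      intro v hv; rw [hudef]; simp only [if_pos hv]
    rw [Finset.sum_congr rfl hpt, ← Finset.sum_mul]
    exact mul_inv_cancel₀ (ne_of_gt ha)
  have hsSc : ∑ v ∈ Sᶜ, muW c v * u v = -1 := by
    have hpt : ∀ v ∈ Sᶜ, muW c v * u v = muW c v * (-b⁻¹) := by
      intro v hv; rw [hudef]; simp only [if_neg (Finset.mem_compl.1 hv)]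
    rw [Finset.sum_congr rfl hpt, ← Finset.sum_mul]
    rw [show (∑ v ∈ Sᶜ, muW c v) = b from rfl]
    field_simp
  have horth : ∑ v, muW c v * u v = 0 := by
    rw [← Finset.sum_add_sum_compl S, hsS, hsSc]
    ring
  have hdn : dnW c u = a⁻¹ + b⁻¹ := by
    rw [dnW, ← Finset.sum_add_sum_compl S]
    have h1 : ∑ v ∈ S, muW c v * u v ^ 2 = a⁻¹ := by
      have hpt : ∀ v ∈ S, muW c v * u v ^ 2 = muW c v * (a⁻¹)^2 := by
        intro v hv; rw [hudef]; simp only [if_pos hv]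
      rw [Finset.sum_congr rfl hpt, ← Finset.sum_mul, show (∑ v ∈ S, muW c v) = a from rfl]
      field_simp
    have h2 : ∑ v ∈ Sᶜ, muW c v * u v ^ 2 = b⁻¹ := by
      have hpt : ∀ v ∈ Sᶜ, muW c v * u v ^ 2 = muW c v * (b⁻¹)^2 := by
        intro v hv; rw [hudef]
        simp only [if_neg (Finset.mem_compl.1 hv)]
        ring
      rw [Finset.sum_congr rfl hpt, ← Finset.sum_mul, show (∑ v ∈ Sᶜ, muW c v) = b from rfl]
      field_simp
    rw [h1, h2]
  have hen : enW c u = (a⁻¹ + b⁻¹)^2 * cutW c S := by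
    rw [enW]
    have key : ∀ v w : V, c v w * (u v - u w)^2
        = (a⁻¹+b⁻¹)^2 * (if v ∈ S ∧ w ∈ Sᶜ then c v w else 0)
          + (a⁻¹+b⁻¹)^2 * (if w ∈ S ∧ v ∈ Sᶜ then c v w else 0) := by
      intro v w
      by_cases hv : v ∈ S <;> by_cases hw2 : w ∈ S <;>
        simp only [hudef, Finset.mem_compl, hv, hw2, if_pos, if_neg, and_true, and_false,
          true_and, false_and, if_true, if_false, not_true_eq_false, not_false_eq_true] <;>
        ring
    rw [Finset.sum_congr rfl (fun v _ => Finset.sum_congr rfl (fun w _ => key v w))]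
    simp only [Finset.sum_add_distrib, ← Finset.mul_sum]
    rw [← cutW_eq_sum c S, cutW_eq_sum' hw S]
    ring
  refine ⟨u, hune, horth, ?_⟩
  rw [hen, hdn]
  have hab : 0 < a⁻¹ + b⁻¹ := by positivity
  rw [show (a⁻¹+b⁻¹)^2 * cutW c S / (a⁻¹+b⁻¹) = (a⁻¹+b⁻¹) * cutW c S by
    field_simp]
  have hcut := cutW_nonneg hw S
  have hminpos : 0 < min a b := lt_min ha hb
  rw [show 2 * (cutW c S / min a b) = (2 / min a b) * cutW c S by ring]
  apply mul_le_mul_of_nonneg_right _ hcut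
  rcases min_cases a b with ⟨hm, hle⟩ | ⟨hm, hle⟩ <;> rw [hm]
  · have h1 : b⁻¹ ≤ a⁻¹ := inv_anti₀ ha hle
    rw [show (2:ℝ)/a = a⁻¹ + a⁻¹ by rw [div_eq_mul_inv]; ring]
    linarith
  · have h1 : a⁻¹ ≤ b⁻¹ := inv_anti₀ hb hle.le
    rw [show (2:ℝ)/b = b⁻¹ + b⁻¹ by rw [div_eq_mul_inv]; ring]
    linarith


section Bridge

variable (G : SimpleGraph V) [DecidableRel G.Adj] (B : Finset V)

/-- the edge weights: 1/2 on boundary-boundary edges, 1 otherwise -/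
noncomputable def cW : V → V → ℝ := fun v w =>
  (if v ∈ B ∧ w ∈ B then 1/2 else 1) * (if G.Adj v w then 1 else 0)

lemma cW_symm (v w : V) : cW G B v w = cW G B w v := by
  unfold cW
  have h2 : G.Adj w v ↔ G.Adj v w := ⟨fun h => h.symm, fun h => h.symm⟩
  by_cases hv : v ∈ B <;> by_cases hw2 : w ∈ B <;> simp [hv, hw2, h2]

lemma cW_nn (v w : V) : 0 ≤ cW G B v w := by
  unfold cW
  split <;> split <;> norm_num

lemma cW_loopless (v : V) : cW G B v v = 0 := by
  unfold cW
  rw [if_neg (G.loopless.irrefl v), mul_zero]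

lemma qw_pos (v : V) : 0 < qw B v := by
  unfold qw; split <;> norm_num

lemma qw_mul_reflAdj (v w : V) : qw B v * reflAdj G B v w = cW G B v w := by
  unfold qw reflAdj cW adjMat
  by_cases hv : v ∈ B <;> by_cases hw2 : w ∈ B <;>
    simp only [hv, hw2, Matrix.of_apply, and_true, and_false, true_and, false_and,
      not_true_eq_false, not_false_eq_true, if_true, if_false] <;> ring

lemma muW_cW (v : V) : muW (cW G B) v = qw B v * deg G B v := by
  rw [muW, deg, Finset.mul_sum]
  exact Finset.sum_congr rfl fun w _ => (qw_mul_reflAdj G B v w).symm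

lemma wgt_cW (hD : ∀ v, 0 < deg G B v) : Wgt (cW G B) := by
  refine ⟨cW_symm G B, cW_nn G B, ?_, cW_loopless G B⟩
  intro v
  rw [muW_cW]
  exact mul_pos (qw_pos B v) (hD v)

end Bridge
section Ecount
variable (G : SimpleGraph V) [DecidableRel G.Adj] (B : Finset V)

lemma ecount_eq_sum {U W : Finset V} (h : Disjoint U W) :
    (ecount G U W : ℝ) = ∑ v ∈ U, ∑ w ∈ W, (if G.Adj v w then (1:ℝ) else 0) := by
  classical
  rw [ecount]
  have hcard : ((U ×ˢ W).filter fun p => G.Adj p.1 p.2).card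
      = (G.edgeFinset.filter fun e => ∃ u ∈ U, ∃ w ∈ W, e = s(u, w)).card := by
    apply Finset.card_bij (fun p _ => s(p.1, p.2))
    · intro p hp
      rw [Finset.mem_filter] at hp ⊢
      obtain ⟨hmem, hadj⟩ := hp
      rw [Finset.mem_product] at hmem
      exact ⟨SimpleGraph.mem_edgeFinset.2 hadj, p.1, hmem.1, p.2, hmem.2, rfl⟩
    · intro p hp q hq heq
      rw [Finset.mem_filter, Finset.mem_product] at hp hq
      rw [Sym2.eq_iff] at heq
      rcases heq with ⟨h1, h2⟩ | ⟨h1, h2⟩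
      · exact Prod.ext h1 h2
      · exfalso
        exact Finset.disjoint_left.1 h hp.1.1 (h1 ▸ hq.1.2)
    · intro e he
      rw [Finset.mem_filter] at he
      obtain ⟨hee, u, hu, w, hww, rfl⟩ := he
      refine ⟨(u, w), ?_, rfl⟩
      rw [Finset.mem_filter, Finset.mem_product]
      exact ⟨⟨hu, hww⟩, (SimpleGraph.mem_edgeSet G).1 (SimpleGraph.mem_edgeFinset.1 hee)⟩
  rw [← hcard, Finset.card_filter]
  push_cast
  rw [Finset.sum_product]

lemma ecount_singleton (u : V) : (ecount G {u} Finset.univ : ℝ)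
    = ∑ w, (if G.Adj u w then (1:ℝ) else 0) := by
  classical
  have hfil : (G.edgeFinset.filter fun e => ∃ a ∈ ({u} : Finset V), ∃ b ∈ (Finset.univ : Finset V), e = s(a, b))
      = G.incidenceFinset u := by
    rw [G.incidenceFinset_eq_filter u]
    apply Finset.filter_congr
    intro e _
    simp only [Finset.mem_singleton, Finset.mem_univ, true_and]
    constructor
    · rintro ⟨a, rfl, b, rfl⟩
      exact Sym2.mem_iff_exists.2 ⟨b, rfl⟩
    · intro hmem
      obtain ⟨b, rfl⟩ := Sym2.mem_iff_exists.1 hmem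
      exact ⟨u, rfl, b, rfl⟩
  rw [ecount, hfil, SimpleGraph.card_incidenceFinset_eq_degree]
  rw [← SimpleGraph.card_neighborFinset_eq_degree]
  rw [SimpleGraph.neighborFinset_eq_filter, Finset.card_filter]
  push_cast
  rfl

lemma ecount_singleton_B (u : V) : (ecount G ({u} ∩ B) (Finset.univ ∩ B) : ℝ)
    = if u ∈ B then ∑ w ∈ B, (if G.Adj u w then (1:ℝ) else 0) else 0 := by
  classical
  by_cases hu : u ∈ B
  · rw [if_pos hu]
    have hcard : (B.filter fun w => G.Adj u w).card
        = (G.edgeFinset.filter fun e => ∃ a ∈ ({u} : Finset V), ∃ b ∈ B, e = s(a, b)).card := by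
      apply Finset.card_bij (fun w _ => s(u, w))
      · intro w hw
        rw [Finset.mem_filter] at hw ⊢
        exact ⟨SimpleGraph.mem_edgeFinset.2 hw.2, u, Finset.mem_singleton_self u, w, hw.1, rfl⟩
      · intro w hw w' hw' heq
        rw [Sym2.eq_iff] at heq
        rcases heq with ⟨-, h2⟩ | ⟨h1, h2⟩
        · exact h2
        · rw [h2]; exact h1
      · intro e he
        rw [Finset.mem_filter] at he
        obtain ⟨hee, a, ha, b, hb, rfl⟩ := he
        rw [Finset.mem_singleton] at ha
        subst ha
        refine ⟨b, ?_, rfl⟩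
        rw [Finset.mem_filter]
        exact ⟨hb, (SimpleGraph.mem_edgeSet G).1 (SimpleGraph.mem_edgeFinset.1 hee)⟩
    rw [ecount]
    rw [Finset.singleton_inter_of_mem hu]
    rw [Finset.univ_inter]
    rw [← hcard]
    rw [Finset.card_filter]
    push_cast
    rfl
  · rw [if_neg hu, ecount, Finset.singleton_inter_of_notMem hu]
    erw [show (G.edgeFinset.filter fun e => ∃ a ∈ (∅ : Finset V), ∃ b ∈ Finset.univ ∩ B, e = s(a, b)) = ∅ by
      apply Finset.filter_false_of_mem
      intro e _
      rintro ⟨a, ha, -⟩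
      exact absurd ha (Finset.notMem_empty a)]
    simp

end Ecount

section Meas
variable (G : SimpleGraph V) [DecidableRel G.Adj] (B : Finset V)

lemma mMeas_single (u : V) : mMeas G B {u} Finset.univ = muW (cW G B) u := by
  classical
  rw [mMeas, ecount_singleton, ecount_singleton_B, muW]
  by_cases hu : u ∈ B
  · rw [if_pos hu]
    have hpt : ∀ w : V, cW G B u w
        = (if G.Adj u w then (1:ℝ) else 0)
          - (1/2) * (if w ∈ B then (if G.Adj u w then (1:ℝ) else 0) else 0) := by
      intro w
      unfold cW
      by_cases hw2 : w ∈ B <;> by_cases ha : G.Adj u w <;>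
        simp [hu, hw2, ha] <;> norm_num
    rw [Finset.sum_congr rfl (fun w _ => hpt w), Finset.sum_sub_distrib, ← Finset.mul_sum]
    rw [Finset.sum_ite_mem, Finset.univ_inter]
  · rw [if_neg hu]
    have hpt : ∀ w : V, cW G B u w = (if G.Adj u w then (1:ℝ) else 0) := by
      intro w
      unfold cW
      rw [if_neg (fun h => hu h.1), one_mul]
    rw [Finset.sum_congr rfl (fun w _ => hpt w)]
    ring

lemma vol_eq (S : Finset V) : vol G B S = volW (cW G B) S := by
  rw [vol, volW]
  exact Finset.sum_congr rfl fun u _ => mMeas_single G B u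

lemma mMeas_cut (S : Finset V) : mMeas G B S Sᶜ = cutW (cW G B) S := by
  classical
  have hdisj : Disjoint S Sᶜ := disjoint_compl_right
  have hdisj2 : Disjoint (S ∩ B) (Sᶜ ∩ B) :=
    Disjoint.mono Finset.inter_subset_left Finset.inter_subset_left hdisj
  rw [mMeas, ecount_eq_sum G hdisj, ecount_eq_sum G hdisj2]
  have h2 : ∑ v ∈ S ∩ B, ∑ w ∈ Sᶜ ∩ B, (if G.Adj v w then (1:ℝ) else 0)
      = ∑ v ∈ S, ∑ w ∈ Sᶜ, (if v ∈ B ∧ w ∈ B then (if G.Adj v w then (1:ℝ) else 0) else 0) := by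
    rw [← Finset.sum_ite_mem S B]
    apply Finset.sum_congr rfl
    intro v _
    by_cases hv : v ∈ B
    · rw [if_pos hv, ← Finset.sum_ite_mem Sᶜ B]
      apply Finset.sum_congr rfl
      intro w _
      by_cases hw2 : w ∈ B
      · simp [hv, hw2]
      · simp [hw2]
    · rw [if_neg hv]
      symm
      exact Finset.sum_eq_zero fun w _ => by simp [hv]
  rw [h2, cutW, Finset.mul_sum, ← Finset.sum_sub_distrib]
  apply Finset.sum_congr rfl
  intro v _
  rw [Finset.mul_sum, ← Finset.sum_sub_distrib]
  apply Finset.sum_congr rfl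
  intro w _
  unfold cW
  by_cases hv : v ∈ B <;> by_cases hw2 : w ∈ B <;> by_cases ha : G.Adj v w <;>
    simp [hv, hw2, ha] <;> norm_num

end Meas

section Quad
variable {c : V → V → ℝ}

lemma enW_expand (hw : Wgt c) (u : V → ℝ) :
    enW c u = dnW c u - ∑ v, ∑ w, c v w * u v * u w := by
  rw [enW]
  have e1 : ∀ v w : V, c v w * (u v - u w)^2
      = c v w * u v^2 + c v w * u w^2 - 2*(c v w * u v * u w) := fun v w => by ring
  rw [Finset.sum_congr rfl fun v _ => Finset.sum_congr rfl fun w _ => e1 v w]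
  have h1 : ∑ v, ∑ w : V, c v w * u v^2 = dnW c u := by
    rw [dnW]
    exact Finset.sum_congr rfl fun v _ => by rw [muW, Finset.sum_mul]
  have h2 : ∑ v, ∑ w : V, c v w * u w^2 = dnW c u := by
    rw [Finset.sum_comm, ← h1]
    exact Finset.sum_congr rfl fun v _ => Finset.sum_congr rfl fun w _ => by rw [hw.symm]
  have h3 : ∑ v, ∑ w : V, (c v w * u v^2 + c v w * u w^2 - 2*(c v w * u v * u w))
      = (∑ v, ∑ w : V, c v w * u v^2) + (∑ v, ∑ w : V, c v w * u w^2)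
        - 2 * ∑ v, ∑ w : V, c v w * u v * u w := by
    simp only [Finset.sum_add_distrib, Finset.sum_sub_distrib, ← Finset.mul_sum]
  rw [h3, h1, h2]
  ring

variable (G : SimpleGraph V) [DecidableRel G.Adj] (B : Finset V)

lemma M_entry (v w : V) : (Qhalf B * NLR G B * Qinvhalf B) v w
    = Real.sqrt (qw B v) * (Real.sqrt (deg G B v))⁻¹ * (LR G B v w)
      * (Real.sqrt (deg G B w))⁻¹ * (Real.sqrt (qw B w))⁻¹ := by
  rw [Qhalf, Qinvhalf, NLR, Dinvhalf]
  rw [Matrix.mul_diagonal, Matrix.diagonal_mul, Matrix.mul_diagonal, Matrix.diagonal_mul]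
  ring

lemma quad_eq (hD : ∀ v, 0 < deg G B v) (u : V → ℝ) :
    (fun v => Real.sqrt (qw B v * deg G B v) * u v) ⬝ᵥ
      ((Qhalf B * NLR G B * Qinvhalf B) *ᵥ fun v => Real.sqrt (qw B v * deg G B v) * u v)
    = enW (cW G B) u := by
  have hterm : ∀ v w : V, (Real.sqrt (qw B v * deg G B v) * u v) *
      ((Qhalf B * NLR G B * Qinvhalf B) v w * (Real.sqrt (qw B w * deg G B w) * u w))
      = qw B v * LR G B v w * u v * u w := by
    intro v w
    rw [M_entry]
    rw [Real.sqrt_mul (qw_pos B v).le, Real.sqrt_mul (qw_pos B w).le]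
    have h1 : Real.sqrt (qw B v) * Real.sqrt (qw B v) = qw B v :=
      Real.mul_self_sqrt (qw_pos B v).le
    have h2 : Real.sqrt (deg G B v) * (Real.sqrt (deg G B v))⁻¹ = 1 :=
      mul_inv_cancel₀ (ne_of_gt (Real.sqrt_pos.2 (hD v)))
    have h3 : Real.sqrt (deg G B w) * (Real.sqrt (deg G B w))⁻¹ = 1 :=
      mul_inv_cancel₀ (ne_of_gt (Real.sqrt_pos.2 (hD w)))
    have h4 : Real.sqrt (qw B w) * (Real.sqrt (qw B w))⁻¹ = 1 :=
      mul_inv_cancel₀ (ne_of_gt (Real.sqrt_pos.2 (qw_pos B w)))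
    rw [show Real.sqrt (qw B v) * Real.sqrt (deg G B v) * u v *
        (Real.sqrt (qw B v) * (Real.sqrt (deg G B v))⁻¹ * LR G B v w
          * (Real.sqrt (deg G B w))⁻¹ * (Real.sqrt (qw B w))⁻¹ *
         (Real.sqrt (qw B w) * Real.sqrt (deg G B w) * u w))
        = (Real.sqrt (qw B v) * Real.sqrt (qw B v))
          * (Real.sqrt (deg G B v) * (Real.sqrt (deg G B v))⁻¹)
          * (Real.sqrt (deg G B w) * (Real.sqrt (deg G B w))⁻¹)
          * (Real.sqrt (qw B w) * (Real.sqrt (qw B w))⁻¹)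
          * (LR G B v w) * u v * u w by ring]
    rw [h1, h2, h3, h4]
    ring
  rw [dotProduct]
  simp only [Matrix.mulVec, dotProduct, Finset.mul_sum]
  rw [Finset.sum_congr rfl fun v _ => Finset.sum_congr rfl fun w _ => hterm v w]
  have hsplit : ∀ v : V, ∑ w, qw B v * LR G B v w * u v * u w
      = muW (cW G B) v * u v ^ 2 - ∑ w, cW G B v w * u v * u w := by
    intro v
    have hpt : ∀ w : V, qw B v * LR G B v w * u v * u w
        = (if v = w then qw B v * deg G B v * u v * u w else 0) - cW G B v w * u v * u w := by
      intro w
      rw [LR, Matrix.sub_apply, Dmat, Matrix.diagonal_apply, ← qw_mul_reflAdj]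
      by_cases hvw : v = w
      · rw [if_pos hvw, if_pos hvw]; ring
      · rw [if_neg hvw, if_neg hvw]; ring
    rw [Finset.sum_congr rfl fun w _ => hpt w, Finset.sum_sub_distrib]
    congr 1
    rw [Finset.sum_ite_eq, if_pos (Finset.mem_univ v), muW_cW]
    ring
  rw [Finset.sum_congr rfl fun v _ => hsplit v, Finset.sum_sub_distrib]
  rw [enW_expand (wgt_cW G B hD) u, dnW]

lemma dot_self_eq (hD : ∀ v, 0 < deg G B v) (u : V → ℝ) :
    (fun v => Real.sqrt (qw B v * deg G B v) * u v) ⬝ᵥ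
      (fun v => Real.sqrt (qw B v * deg G B v) * u v) = dnW (cW G B) u := by
  rw [dotProduct, dnW]
  apply Finset.sum_congr rfl
  intro v _
  rw [muW_cW]
  have h := Real.mul_self_sqrt (mul_nonneg (qw_pos B v).le (hD v).le)
  linear_combination (u v * u v) * h

lemma constraint_eq (hD : ∀ v, 0 < deg G B v) (u : V → ℝ) :
    (fun v => Real.sqrt (qw B v * deg G B v) * u v) ⬝ᵥ
      ((Dhalf G B * Qhalf B) *ᵥ fun _ => (1:ℝ))
    = ∑ v, muW (cW G B) v * u v := by
  rw [dotProduct]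
  apply Finset.sum_congr rfl
  intro v _
  rw [Dhalf, Qhalf, Matrix.diagonal_mul_diagonal, Matrix.mulVec_diagonal, muW_cW]
  rw [mul_one, show Real.sqrt (deg G B v) * Real.sqrt (qw B v)
      = Real.sqrt (qw B v) * Real.sqrt (deg G B v) by ring,
    ← Real.sqrt_mul (qw_pos B v).le]
  have h := Real.mul_self_sqrt (mul_nonneg (qw_pos B v).le (hD v).le)
  linear_combination (u v) * h

end Quad


section Main
variable (G : SimpleGraph V) [DecidableRel G.Adj] (B : Finset V)

lemma raySet_eq (hD : ∀ v, 0 < deg G B v) :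
    {r : ℝ | ∃ x : V → ℝ, x ≠ 0 ∧
      x ⬝ᵥ ((Dhalf G B * Qhalf B) *ᵥ fun _ => 1) = 0 ∧
      r = x ⬝ᵥ ((Qhalf B * NLR G B * Qinvhalf B) *ᵥ x) / (x ⬝ᵥ x)}
    = {r : ℝ | ∃ u : V → ℝ, u ≠ 0 ∧ (∑ v, muW (cW G B) v * u v) = 0 ∧
      r = enW (cW G B) u / dnW (cW G B) u} := by
  have hsq : ∀ v, 0 < Real.sqrt (qw B v * deg G B v) :=
    fun v => Real.sqrt_pos.2 (mul_pos (qw_pos B v) (hD v))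
  ext r
  simp only [Set.mem_setOf_eq]
  constructor
  · rintro ⟨x, hx0, hxc, hxr⟩
    set u : V → ℝ := fun v => x v / Real.sqrt (qw B v * deg G B v) with hudef
    have hxu : x = fun v => Real.sqrt (qw B v * deg G B v) * u v := by
      funext v
      rw [hudef]
      dsimp only
      rw [mul_comm (Real.sqrt (qw B v * deg G B v)) (x v / Real.sqrt (qw B v * deg G B v)),
        div_mul_cancel₀ _ (ne_of_gt (hsq v))]
    have hu0 : u ≠ 0 := by
      intro h
      apply hx0
      rw [hxu, h]
      funext v; simp
    refine ⟨u, hu0, ?_, ?_⟩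
    · rw [hxu] at hxc
      rwa [constraint_eq G B hD u] at hxc
    · rw [hxr, hxu, quad_eq G B hD u, dot_self_eq G B hD u]
  · rintro ⟨u, hu0, huc, hur⟩
    refine ⟨fun v => Real.sqrt (qw B v * deg G B v) * u v, ?_, ?_, ?_⟩
    · intro h
      apply hu0
      funext v
      have h2 := congrFun h v
      simp only [Pi.zero_apply] at h2 ⊢
      exact (mul_eq_zero.1 h2).elim (fun h3 => absurd h3 (ne_of_gt (hsq v))) id
    · rw [constraint_eq G B hD u]; exact huc
    · rw [quad_eq G B hD u, dot_self_eq G B hD u]; exact hur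

lemma chgSet_eq :
    {r : ℝ | ∃ S : Finset V, S.Nonempty ∧ S ≠ Finset.univ ∧
      r = mMeas G B S Sᶜ / min (vol G B S) (vol G B Sᶜ)}
    = {r : ℝ | ∃ S : Finset V, S.Nonempty ∧ S ≠ Finset.univ ∧
      r = cutW (cW G B) S / min (volW (cW G B) S) (volW (cW G B) Sᶜ)} := by
  ext r
  simp only [Set.mem_setOf_eq]
  constructor
  · rintro ⟨S, h1, h2, rfl⟩
    exact ⟨S, h1, h2, by rw [mMeas_cut, vol_eq, vol_eq]⟩
  · rintro ⟨S, h1, h2, rfl⟩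
    exact ⟨S, h1, h2, by rw [mMeas_cut, vol_eq, vol_eq]⟩

end Main

end RNProof


/-- **Cheeger inequality for the reflected Neumann graph Laplacian.** For a finite simple
graph `G` with boundary `B ⊆ V` such that every diagonal entry of `D` is strictly positive
and `vol(S) > 0` for every nonempty `S ⊆ V`, the first nontrivial eigenvalue `λ_R` of the
normalized reflected Neumann Laplacian `𝓛_R` and the Cheeger constant `h_R` satisfy
`√(2λ_R) ≥ h_R ≥ λ_R / 2`. -/
theorem reflected_neumann_cheeger_inequality {V : Type*} [Fintype V] [DecidableEq V]
    (G : SimpleGraph V) [DecidableRel G.Adj] (B : Finset V)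
    (hD : ∀ v, 0 < deg G B v)
    (hvol : ∀ S : Finset V, S.Nonempty → 0 < vol G B S) :
    Real.sqrt (2 * lambdaR G B) ≥ cheegerR G B ∧ cheegerR G B ≥ lambdaR G B / 2 := by
  classical
  have hw : RNProof.Wgt (RNProof.cW G B) := RNProof.wgt_cW G B hD
  set c := RNProof.cW G B with hc
  set RaySet : Set ℝ := {r : ℝ | ∃ u : V → ℝ, u ≠ 0 ∧ (∑ v, RNProof.muW c v * u v) = 0 ∧
      r = RNProof.enW c u / RNProof.dnW c u} with hRaySet
  set ChgSet : Set ℝ := {r : ℝ | ∃ S : Finset V, S.Nonempty ∧ S ≠ Finset.univ ∧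
      r = RNProof.cutW c S / min (RNProof.volW c S) (RNProof.volW c Sᶜ)} with hChgSet
  have hlam : lambdaR G B = sInf RaySet := by
    rw [lambdaR, RNProof.raySet_eq G B hD]
  have hchg : cheegerR G B = sInf ChgSet := by
    rw [cheegerR, RNProof.chgSet_eq G B]
  have hRayLB : ∀ r ∈ RaySet, (0:ℝ) ≤ r := by
    rintro r ⟨u, hu0, huc, rfl⟩
    exact div_nonneg (RNProof.enW_nonneg hw u) (RNProof.dnW_nonneg hw u)
  have hChgLB : ∀ r ∈ ChgSet, (0:ℝ) ≤ r := by
    rintro r ⟨S, hSne, hSuniv, rfl⟩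
    apply div_nonneg (RNProof.cutW_nonneg hw S)
    exact le_min (RNProof.volW_nonneg hw S) (RNProof.volW_nonneg hw Sᶜ)
  by_cases hcard : 1 < Fintype.card V
  · obtain ⟨v0, v1, hne⟩ := Fintype.exists_pair_of_one_lt_card hcard
    have hS0ne : ({v0} : Finset V).Nonempty := Finset.singleton_nonempty v0
    have hS0uni : ({v0} : Finset V) ≠ Finset.univ := by
      intro h
      have : v1 ∈ ({v0} : Finset V) := h ▸ Finset.mem_univ v1
      exact hne.symm (Finset.mem_singleton.1 this)
    have hS0c : (({v0} : Finset V)ᶜ).Nonempty := by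
      refine ⟨v1, Finset.mem_compl.2 ?_⟩
      rw [Finset.mem_singleton]
      exact fun h => hne.symm h
    have hChgNe : ChgSet.Nonempty :=
      ⟨_, ⟨{v0}, hS0ne, hS0uni, rfl⟩⟩
    obtain ⟨u0, hu00, hu0c, hu0b⟩ := RNProof.abstract_easy hw hS0ne hS0c
    have hRayNe : RaySet.Nonempty := ⟨_, ⟨u0, hu00, hu0c, rfl⟩⟩
    have heasy : ∀ r ∈ ChgSet, lambdaR G B / 2 ≤ r := by
      rintro r ⟨S, hSne, hSuniv, rfl⟩
      have hScne : (Sᶜ).Nonempty := by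
        by_contra h
        rw [Finset.not_nonempty_iff_eq_empty, Finset.compl_eq_empty_iff] at h
        exact hSuniv h
      obtain ⟨u, hu0, huc, hub⟩ := RNProof.abstract_easy hw hSne hScne
      have hmem : RNProof.enW c u / RNProof.dnW c u ∈ RaySet := ⟨u, hu0, huc, rfl⟩
      have hle : lambdaR G B ≤ RNProof.enW c u / RNProof.dnW c u := by
        rw [hlam]
        exact csInf_le ⟨0, hRayLB⟩ hmem
      linarith
    have h2 : cheegerR G B ≥ lambdaR G B / 2 := by
      rw [ge_iff_le, hchg]
      exact le_csInf hChgNe heasy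
    have hchg0 : 0 ≤ cheegerR G B := by
      rw [hchg]
      exact le_csInf hChgNe hChgLB
    have hhard : ∀ r ∈ RaySet, cheegerR G B ^ 2 / 2 ≤ r := by
      rintro r ⟨u, hu0, huc, rfl⟩
      obtain ⟨S, hSne, hSuniv, hSle⟩ := RNProof.abstract_hard hw hu0 huc
      have h1 : cheegerR G B ≤ RNProof.cutW c S / min (RNProof.volW c S) (RNProof.volW c Sᶜ) := by
        rw [hchg]
        exact csInf_le ⟨0, hChgLB⟩ ⟨S, hSne, hSuniv, rfl⟩
      have h3 : cheegerR G B ≤ Real.sqrt (2 * (RNProof.enW c u / RNProof.dnW c u)) :=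
        le_trans h1 hSle
      have hnn : 0 ≤ 2 * (RNProof.enW c u / RNProof.dnW c u) := by
        have := div_nonneg (RNProof.enW_nonneg hw u) (RNProof.dnW_nonneg hw u)
        linarith
      have h4 : cheegerR G B ^ 2 ≤ 2 * (RNProof.enW c u / RNProof.dnW c u) := by
        have hs := Real.sq_sqrt hnn
        nlinarith [h3, hchg0, Real.sqrt_nonneg (2 * (RNProof.enW c u / RNProof.dnW c u))]
      linarith
    have hl : cheegerR G B ^ 2 / 2 ≤ lambdaR G B := by
      rw [hlam]
      exact le_csInf hRayNe hhard
    have h1 : Real.sqrt (2 * lambdaR G B) ≥ cheegerR G B := by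
      rw [ge_iff_le]
      calc cheegerR G B = Real.sqrt (cheegerR G B ^ 2) := (Real.sqrt_sq hchg0).symm
        _ ≤ Real.sqrt (2 * lambdaR G B) := Real.sqrt_le_sqrt (by linarith)
    exact ⟨h1, h2⟩
  · push_neg at hcard
    have hChgE : ChgSet = ∅ := by
      rw [Set.eq_empty_iff_forall_notMem]
      rintro r ⟨S, hSne, hSuniv, -⟩
      obtain ⟨v, hv⟩ := hSne
      obtain ⟨w, hw2⟩ : ∃ w, w ∉ S := by
        by_contra h
        push_neg at h
        exact hSuniv (Finset.eq_univ_iff_forall.2 h)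
      have : 1 < Fintype.card V := Fintype.one_lt_card_iff.2 ⟨v, w, fun h => hw2 (h ▸ hv)⟩
      omega
    have hRayE : RaySet = ∅ := by
      rw [Set.eq_empty_iff_forall_notMem]
      rintro r ⟨u, hu0, huc, -⟩
      apply hu0
      rcases Nat.lt_or_ge (Fintype.card V) 1 with h1 | h1
      · have : IsEmpty V := Fintype.card_eq_zero_iff.1 (by omega)
        exact funext fun v => absurd trivial (this.elim v)
      · have hone : Fintype.card V = 1 := by omega
        obtain ⟨v0, hv0⟩ := Fintype.card_eq_one_iff.1 hone
        have huniv : (Finset.univ : Finset V) = {v0} := by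
          apply Finset.eq_singleton_iff_unique_mem.2
          exact ⟨Finset.mem_univ v0, fun x _ => hv0 x⟩
        rw [huniv, Finset.sum_singleton] at huc
        have hu0v : u v0 = 0 := by
          rcases mul_eq_zero.1 huc with h | h
          · exact absurd h (ne_of_gt (hw.pos v0))
          · exact h
        funext v
        rw [hv0 v, hu0v]
        rfl
    rw [hlam, hchg, hChgE, hRayE, Real.sInf_empty]
    norm_num
end

section
/- Let G=(V,E) be a finite simple graph with boundary set ∂V ⊆ V such that every diagonal entry of D is strictly positive and such that vol(S) > 0 for every nonempty S ⊆ V. Then λ_R ≤ 2·h_R, i.e. the first nontrivial eigenvalue of the normalized reflected Neumann graph Laplacian is at most twice the Cheeger constant h_R. -/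
open Matrix Finset

open RN

section Aux
set_option linter.unusedSectionVars false


variable {V : Type*} [Fintype V] [DecidableEq V] (G : SimpleGraph V) [DecidableRel G.Adj] (B : Finset V)

lemma adjMat_symm (u v : V) : adjMat G u v = adjMat G v u := by
  simp [adjMat, G.adj_comm]

lemma adjMat_nonneg (u v : V) : 0 ≤ adjMat G u v := by
  unfold adjMat; dsimp; split <;> norm_num

lemma reflAdj_nonneg (u v : V) : 0 ≤ reflAdj G B u v := by
  unfold reflAdj; dsimp
  have := adjMat_nonneg G u v
  split <;> nlinarith

lemma qw_pos (v : V) : 0 < qw B v := by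
  unfold qw; split <;> norm_num

lemma w_symm (u v : V) : qw B u * reflAdj G B u v = qw B v * reflAdj G B v u := by
  unfold qw reflAdj; dsimp
  rw [adjMat_symm G u v]
  by_cases hu : u ∈ B <;> by_cases hv : v ∈ B <;> simp [hu, hv] <;> ring

lemma sum_w (u : V) : ∑ v, qw B u * reflAdj G B u v = qw B u * deg G B u := by
  rw [deg, Finset.mul_sum]

lemma w_eq (u v : V) :
    qw B u * reflAdj G B u v
      = adjMat G u v - (1/2) * (if u ∈ B ∧ v ∈ B then adjMat G u v else 0) := by
  unfold qw reflAdj; dsimp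
  by_cases hu : u ∈ B <;> by_cases hv : v ∈ B <;> simp [hu, hv] <;> ring


lemma ecount_singleton (u : V) (W : Finset V) :
    ecount G {u} W = (G.neighborFinset u ∩ W).card := by
  unfold ecount
  refine (Finset.card_bij (fun b _ => s(u, b)) ?_ ?_ ?_).symm
  · intro b hb
    rw [Finset.mem_inter, SimpleGraph.mem_neighborFinset] at hb
    simp only [Finset.mem_filter, SimpleGraph.mem_edgeFinset]
    exact ⟨hb.1, u, Finset.mem_singleton_self u, b, hb.2, rfl⟩
  · intro b hb b' hb' hbb'
    rw [Finset.mem_inter, SimpleGraph.mem_neighborFinset] at hb hb'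
    rcases Sym2.eq_iff.mp hbb' with ⟨-, h⟩ | ⟨h1, h2⟩
    · exact h
    · exact (G.loopless.irrefl u (h1 ▸ hb'.1)).elim
  · intro e he
    simp only [Finset.mem_filter, SimpleGraph.mem_edgeFinset, Finset.mem_singleton] at he
    obtain ⟨hadj, a, rfl, w, hw, rfl⟩ := he
    rw [SimpleGraph.mem_edgeSet] at hadj
    refine ⟨w, ?_, rfl⟩
    rw [Finset.mem_inter, SimpleGraph.mem_neighborFinset]
    exact ⟨hadj, hw⟩

lemma ecount_empty_left (W : Finset V) : ecount G ∅ W = 0 := by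
  simp [ecount]

lemma sum_adjMat (u : V) (W : Finset V) :
    ∑ w ∈ W, adjMat G u w = ((G.neighborFinset u ∩ W).card : ℝ) := by
  have : ∑ w ∈ W, adjMat G u w = ∑ w ∈ W, (if G.Adj u w then (1:ℝ) else 0) := rfl
  rw [this, Finset.sum_boole]
  norm_cast
  congr 1
  ext x
  simp [SimpleGraph.mem_neighborFinset, and_comm]

lemma ecount_eq_card_prod {U W : Finset V} (h : Disjoint U W) :
    ecount G U W = ((U ×ˢ W).filter fun p => G.Adj p.1 p.2).card := by
  unfold ecount
  refine (Finset.card_bij (fun p _ => s(p.1, p.2)) ?_ ?_ ?_).symm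
  · intro p hp
    rw [Finset.mem_filter, Finset.mem_product] at hp
    simp only [Finset.mem_filter, SimpleGraph.mem_edgeFinset, SimpleGraph.mem_edgeSet]
    exact ⟨hp.2, p.1, hp.1.1, p.2, hp.1.2, rfl⟩
  · intro p hp p' hp' hpp'
    rw [Finset.mem_filter, Finset.mem_product] at hp hp'
    rcases Sym2.eq_iff.mp hpp' with ⟨h1, h2⟩ | ⟨h1, h2⟩
    · exact Prod.ext h1 h2
    · exact ((Finset.disjoint_left.mp h hp.1.1) (h1 ▸ hp'.1.2)).elim
  · intro e he
    simp only [Finset.mem_filter, SimpleGraph.mem_edgeFinset] at he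
    obtain ⟨hadj, a, ha, w, hw, rfl⟩ := he
    rw [SimpleGraph.mem_edgeSet] at hadj
    exact ⟨(a, w), Finset.mem_filter.mpr ⟨Finset.mem_product.mpr ⟨ha, hw⟩, hadj⟩, rfl⟩

lemma ecount_disjoint {U W : Finset V} (h : Disjoint U W) :
    (ecount G U W : ℝ) = ∑ u ∈ U, ∑ w ∈ W, adjMat G u w := by
  rw [ecount_eq_card_prod G h]
  rw [Finset.sum_product (f := fun p : V × V => adjMat G p.1 p.2) (s := U) (t := W) |>.symm]
  rw [show (∑ p ∈ U ×ˢ W, adjMat G p.1 p.2)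
      = ∑ p ∈ U ×ˢ W, (if G.Adj p.1 p.2 then (1:ℝ) else 0) from rfl, Finset.sum_boole]


lemma ite_sum (S : Finset V) :
    ∑ u ∈ S, ∑ v ∈ Sᶜ, (if u ∈ B ∧ v ∈ B then adjMat G u v else 0)
      = ∑ u ∈ S ∩ B, ∑ v ∈ Sᶜ ∩ B, adjMat G u v := by
  rw [← Finset.filter_mem_eq_inter, ← Finset.filter_mem_eq_inter,
    Finset.sum_filter]
  refine Finset.sum_congr rfl fun u _ => ?_
  rw [Finset.sum_filter]
  by_cases hu : u ∈ B <;> simp [hu]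

lemma mMeas_singleton (u : V) :
    mMeas G B {u} Finset.univ = qw B u * deg G B u := by
  have hrhs : qw B u * deg G B u
      = (∑ v, adjMat G u v)
        - 1/2 * (∑ v, if u ∈ B ∧ v ∈ B then adjMat G u v else 0) := by
    rw [deg, Finset.mul_sum,
      Finset.sum_congr rfl (fun v _ => w_eq G B u v),
      Finset.sum_sub_distrib, ← Finset.mul_sum]
  unfold mMeas
  rw [hrhs, Finset.univ_inter, ecount_singleton, sum_adjMat, Finset.inter_univ]
  congr 1
  by_cases hu : u ∈ B
  · rw [Finset.singleton_inter_of_mem hu, ecount_singleton]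
    congr 1
    simp only [hu, true_and]
    rw [show (∑ v, if v ∈ B then adjMat G u v else 0) = ∑ v ∈ Finset.univ ∩ B, adjMat G u v
        from Finset.sum_ite_mem _ _ _, Finset.univ_inter, sum_adjMat]
  · rw [Finset.singleton_inter_of_notMem hu, ecount_empty_left]
    simp [hu]

lemma vol_eq (S : Finset V) : vol G B S = ∑ u ∈ S, qw B u * deg G B u :=
  Finset.sum_congr rfl fun u _ => mMeas_singleton G B u

lemma mMeas_compl_eq (S : Finset V) :
    mMeas G B S Sᶜ = ∑ u ∈ S, ∑ v ∈ Sᶜ, qw B u * reflAdj G B u v := by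
  have hdisj : Disjoint S Sᶜ := disjoint_compl_right
  have hdisj2 : Disjoint (S ∩ B) (Sᶜ ∩ B) :=
    hdisj.mono Finset.inter_subset_left Finset.inter_subset_left
  unfold mMeas
  rw [ecount_disjoint G hdisj, ecount_disjoint G hdisj2, ← ite_sum,
    Finset.mul_sum, ← Finset.sum_sub_distrib]
  refine Finset.sum_congr rfl fun u _ => ?_
  rw [Finset.mul_sum, ← Finset.sum_sub_distrib]
  exact Finset.sum_congr rfl fun v _ => (w_eq G B u v).symm

lemma mMeas_compl_nonneg (S : Finset V) : 0 ≤ mMeas G B S Sᶜ := by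
  rw [mMeas_compl_eq]
  refine Finset.sum_nonneg fun u _ => Finset.sum_nonneg fun v _ => ?_
  exact mul_nonneg (qw_pos B u).le (reflAdj_nonneg G B u v)

lemma vol_split (S : Finset V) :
    vol G B Finset.univ = vol G B S + vol G B Sᶜ := by
  rw [vol_eq, vol_eq, vol_eq, ← Finset.sum_add_sum_compl S]

lemma vol_eq_mMeas_add (S : Finset V) :
    vol G B S = mMeas G B S Sᶜ + ∑ u ∈ S, ∑ v ∈ S, qw B u * reflAdj G B u v := by
  rw [vol_eq, mMeas_compl_eq]
  rw [← Finset.sum_add_distrib]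
  refine Finset.sum_congr rfl fun u _ => ?_
  rw [← sum_w G B u, ← Finset.sum_add_sum_compl S (fun v => qw B u * reflAdj G B u v)]
  ring

lemma entry_eval (u v : V) :
    (Qhalf B * NLR G B * Qinvhalf B) u v
      = Real.sqrt (qw B u) * ((Real.sqrt (deg G B u))⁻¹ * (LR G B u v *
          ((Real.sqrt (deg G B v))⁻¹ * (Real.sqrt (qw B v))⁻¹))) := by
  simp only [NLR, Qhalf, Qinvhalf, Dinvhalf, Matrix.mul_assoc, Matrix.mul_diagonal,
    Matrix.diagonal_mul]
  ring

lemma quad_eval (x : V → ℝ) :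
    x ⬝ᵥ ((Qhalf B * NLR G B * Qinvhalf B) *ᵥ x)
      = ∑ u, ∑ v, x u * ((Qhalf B * NLR G B * Qinvhalf B) u v * x v) := by
  simp [dotProduct, Matrix.mulVec, Finset.mul_sum]

lemma constraint_eval (x : V → ℝ) :
    x ⬝ᵥ ((Dhalf G B * Qhalf B) *ᵥ fun _ => 1)
      = ∑ u, x u * (Real.sqrt (deg G B u) * Real.sqrt (qw B u)) := by
  rw [Dhalf, Qhalf, Matrix.diagonal_mul_diagonal]
  simp [dotProduct, Matrix.mulVec_diagonal]

lemma dot_self_eq (x : V → ℝ) : x ⬝ᵥ x = ∑ u, x u * x u := rfl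

lemma dot_self_pos {x : V → ℝ} (hx : x ≠ 0) : 0 < x ⬝ᵥ x := by
  obtain ⟨u0, hu0⟩ := Function.ne_iff.mp hx
  rw [dot_self_eq]
  exact Finset.sum_pos' (fun i _ => mul_self_nonneg _)
    ⟨u0, Finset.mem_univ _, mul_self_pos.mpr hu0⟩

lemma lambda_set_bddBelow :
    BddBelow {r : ℝ | ∃ x : V → ℝ, x ≠ 0 ∧
      x ⬝ᵥ ((Dhalf G B * Qhalf B) *ᵥ fun _ => 1) = 0 ∧
      r = x ⬝ᵥ ((Qhalf B * NLR G B * Qinvhalf B) *ᵥ x) / (x ⬝ᵥ x)} := by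
  set M := Qhalf B * NLR G B * Qinvhalf B with hM
  refine ⟨-(∑ u, ∑ v, |M u v|), ?_⟩
  rintro r ⟨x, hx, -, rfl⟩
  have hs : 0 < x ⬝ᵥ x := dot_self_pos hx
  rw [le_div_iff₀ hs, quad_eval]
  have hsq : ∀ u : V, x u ^ 2 ≤ x ⬝ᵥ x := by
    intro u
    rw [dot_self_eq]
    have := Finset.single_le_sum (f := fun w => x w * x w)
      (fun i _ => mul_self_nonneg _) (Finset.mem_univ u)
    rw [sq]
    simpa using this
  have hbound : ∀ u v : V, -(|M u v| * (x ⬝ᵥ x)) ≤ x u * (M u v * x v) := by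
    intro u v
    have hxy : |x u| * |x v| ≤ x ⬝ᵥ x := by
      nlinarith [hsq u, hsq v, abs_nonneg (x u), abs_nonneg (x v), sq_abs (x u), sq_abs (x v),
        sq_nonneg (|x u| - |x v|)]
    have h1 : |x u * (M u v * x v)| ≤ |M u v| * (x ⬝ᵥ x) := by
      rw [abs_mul, abs_mul]
      calc |x u| * (|M u v| * |x v|) = |M u v| * (|x u| * |x v|) := by ring
        _ ≤ |M u v| * (x ⬝ᵥ x) := mul_le_mul_of_nonneg_left hxy (abs_nonneg _)
    linarith [neg_abs_le (x u * (M u v * x v))]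
  calc -(∑ u, ∑ v, |M u v|) * (x ⬝ᵥ x) = ∑ u, ∑ v, -(|M u v| * (x ⬝ᵥ x)) := by
        rw [neg_mul, Finset.sum_mul, ← Finset.sum_neg_distrib]
        exact Finset.sum_congr rfl fun u _ => by
          rw [Finset.sum_mul, ← Finset.sum_neg_distrib]
    _ ≤ ∑ u, ∑ v, x u * (M u v * x v) :=
        Finset.sum_le_sum fun u _ => Finset.sum_le_sum fun v _ => hbound u v

private lemma cancel_aux (a b p r L fu fv : ℝ) (ha : a ≠ 0) (hb : b ≠ 0) (hr : r ≠ 0) :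
    (a * p * fu) * ((p * (a⁻¹ * (L * (b⁻¹ * r⁻¹)))) * (b * r * fv))
      = p * p * L * (fu * fv) := by
  field_simp

lemma sum_w_swap (U W : Finset V) :
    ∑ u ∈ U, ∑ v ∈ W, qw B u * reflAdj G B u v
      = ∑ v ∈ W, ∑ u ∈ U, qw B v * reflAdj G B v u := by
  rw [Finset.sum_comm]
  exact Finset.sum_congr rfl fun v _ => Finset.sum_congr rfl fun u _ => w_symm G B u v

lemma key_ineq (hD : ∀ v, 0 < deg G B v)
    (hvol : ∀ S : Finset V, S.Nonempty → 0 < vol G B S)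
    (S : Finset V) (hS : S.Nonempty) (hS' : S ≠ Finset.univ) :
    lambdaR G B ≤ 2 * (mMeas G B S Sᶜ / min (vol G B S) (vol G B Sᶜ)) := by
  classical
  set d := deg G B with hd
  set q := qw B with hq
  have hSc : Sᶜ.Nonempty :=
    Finset.nonempty_iff_ne_empty.mpr fun h => hS' ((Finset.compl_eq_empty_iff _).mp h)
  set vS := vol G B S with hvS'
  set vC := vol G B Sᶜ with hvC'
  have hvS : 0 < vS := hvol S hS
  have hvC : 0 < vC := hvol Sᶜ hSc
  set vT := vS + vC with hvT'
  have hvT : 0 < vT := by positivity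
  set mm := mMeas G B S Sᶜ with hmm'
  have hmm0 : 0 ≤ mm := mMeas_compl_nonneg G B S
  have hvolS : ∑ u ∈ S, q u * d u = vS := (vol_eq G B S).symm
  have hvolC : ∑ u ∈ Sᶜ, q u * d u = vC := (vol_eq G B Sᶜ).symm
  set c := vS / vT with hc
  have hc1 : c < 1 := by
    rw [hc, div_lt_one hvT]
    linarith
  set f : V → ℝ := fun u => (if u ∈ S then 1 else 0) - c with hf
  have hfS : ∀ u ∈ S, f u = 1 - c := fun u hu => by simp [hf, hu]
  have hfC : ∀ u ∈ Sᶜ, f u = -c := fun u hu => by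
    rw [Finset.mem_compl] at hu; simp [hf, hu]
  set x : V → ℝ := fun u => Real.sqrt (d u) * Real.sqrt (q u) * f u with hx
  have hsd : ∀ u, Real.sqrt (d u) ≠ 0 := fun u => (Real.sqrt_pos.mpr (hD u)).ne'
  have hsq : ∀ u, Real.sqrt (q u) ≠ 0 := fun u => (Real.sqrt_pos.mpr (qw_pos B u)).ne'
  have hdd : ∀ u, Real.sqrt (d u) * Real.sqrt (d u) = d u :=
    fun u => Real.mul_self_sqrt (hD u).le
  have hqq : ∀ u, Real.sqrt (q u) * Real.sqrt (q u) = q u :=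
    fun u => Real.mul_self_sqrt (qw_pos B u).le
  -- x ≠ 0
  obtain ⟨u0, hu0⟩ := hS
  have hx0 : x ≠ 0 := by
    refine Function.ne_iff.mpr ⟨u0, ?_⟩
    rw [hx]
    dsimp only
    rw [hfS u0 hu0]
    have h1 : (1 : ℝ) - c ≠ 0 := by linarith
    simp only [Pi.zero_apply]
    exact mul_ne_zero (mul_ne_zero (hsd u0) (hsq u0)) h1
  -- constraint
  have hconstraint : x ⬝ᵥ ((Dhalf G B * Qhalf B) *ᵥ fun _ => 1) = 0 := by
    rw [constraint_eval]
    have h1 : ∀ u : V, x u * (Real.sqrt (d u) * Real.sqrt (q u)) = q u * d u * f u := by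
      intro u
      rw [hx]
      dsimp only
      rw [show Real.sqrt (d u) * Real.sqrt (q u) * f u * (Real.sqrt (d u) * Real.sqrt (q u))
          = (Real.sqrt (d u) * Real.sqrt (d u)) * (Real.sqrt (q u) * Real.sqrt (q u)) * f u
        from by ring, hdd, hqq]
      ring
    rw [Finset.sum_congr rfl fun u _ => h1 u]
    have h2 : ∀ u : V, q u * d u * f u
        = (if u ∈ S then q u * d u else 0) - q u * d u * c := by
      intro u
      by_cases hu : u ∈ S <;> simp [hf, hu] <;> ring
    rw [Finset.sum_congr rfl fun u _ => h2 u, Finset.sum_sub_distrib,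
      Finset.sum_ite_mem, Finset.univ_inter, hvolS, ← Finset.sum_mul,
      Finset.sum_congr rfl fun u _ => rfl, ← vol_eq, vol_split G B S, ← hvS', ← hvC', ← hvT',
      hc]
    field_simp
    ring
  -- numerator
  set M := Qhalf B * NLR G B * Qinvhalf B with hM
  have hnum : x ⬝ᵥ (M *ᵥ x) = mm := by
    rw [quad_eval]
    have h1 : ∀ u v : V, x u * (M u v * x v) = q u * LR G B u v * (f u * f v) := by
      intro u v
      rw [hM, entry_eval, hx]
      dsimp only
      rw [cancel_aux _ _ _ _ _ _ _ (hsd u) (hsd v) (hsq v), hqq]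
    rw [Finset.sum_congr rfl fun u _ => Finset.sum_congr rfl fun v _ => h1 u v]
    have h2 : ∀ u v : V, q u * LR G B u v * (f u * f v)
        = (if u = v then q u * d u * (f u * f v) else 0)
          - q u * reflAdj G B u v * (f u * f v) := by
      intro u v
      rw [LR, Matrix.sub_apply, Dmat, Matrix.diagonal_apply]
      by_cases huv : u = v <;> simp [huv] <;> ring
    rw [Finset.sum_congr rfl fun u _ => Finset.sum_congr rfl fun v _ => h2 u v]
    rw [Finset.sum_congr rfl fun u _ => Finset.sum_sub_distrib _ _, Finset.sum_sub_distrib]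
    have h3 : ∀ u : V, (∑ v, if u = v then q u * d u * (f u * f v) else 0)
        = q u * d u * (f u * f u) := by
      intro u
      rw [Finset.sum_ite_eq]
      simp
    rw [Finset.sum_congr rfl fun u _ => h3 u]
    -- diagonal part equals vS (1-c)^2 + vC c^2
    have hdiag : ∑ u, q u * d u * (f u * f u) = vS * ((1-c)*(1-c)) + vC * (c*c) := by
      rw [← Finset.sum_add_sum_compl S (fun u => q u * d u * (f u * f u)), ← hvolS, ← hvolC,
        Finset.sum_mul, Finset.sum_mul]
      congr 1
      · exact Finset.sum_congr rfl fun u hu => by rw [hfS u hu]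
      · exact Finset.sum_congr rfl fun u hu => by rw [hfC u hu]; ring
    rw [hdiag]
    -- off-diagonal part
    set P := ∑ u ∈ S, ∑ v ∈ S, q u * reflAdj G B u v with hP
    have hPS : vS = mm + P := vol_eq_mMeas_add G B S
    have hASc : ∑ u ∈ S, ∑ v ∈ Sᶜ, q u * reflAdj G B u v = mm := (mMeas_compl_eq G B S).symm
    have hAcS : ∑ u ∈ Sᶜ, ∑ v ∈ S, q u * reflAdj G B u v = mm := by
      rw [sum_w_swap]; exact hASc
    have hAcc : ∑ u ∈ Sᶜ, ∑ v ∈ Sᶜ, q u * reflAdj G B u v = vC - mm := by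
      have := vol_eq_mMeas_add G B Sᶜ
      rw [compl_compl] at this
      have hmmc : mMeas G B Sᶜ S = mm := by
        rw [show mMeas G B Sᶜ S = mMeas G B Sᶜ (Sᶜ)ᶜ from by rw [compl_compl],
          mMeas_compl_eq, compl_compl, sum_w_swap]
        exact hASc
      rw [hmmc] at this
      linarith [this]
    have hoff : ∑ u, ∑ v, q u * reflAdj G B u v * (f u * f v)
        = P * ((1-c)*(1-c)) + mm * ((1-c)*(-c)) + mm * ((-c)*(1-c)) + (vC - mm) * ((-c)*(-c)) := by
      rw [← Finset.sum_add_sum_compl S (fun u => ∑ v, q u * reflAdj G B u v * (f u * f v))]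
      have hL : ∑ u ∈ S, ∑ v, q u * reflAdj G B u v * (f u * f v)
          = P * ((1-c)*(1-c)) + mm * ((1-c)*(-c)) := by
        rw [← hASc, hP, Finset.sum_mul, Finset.sum_mul, ← Finset.sum_add_distrib]
        refine Finset.sum_congr rfl fun u hu => ?_
        rw [← Finset.sum_add_sum_compl S (fun v => q u * reflAdj G B u v * (f u * f v)),
          Finset.sum_mul, Finset.sum_mul]
        congr 1
        · exact Finset.sum_congr rfl fun v hv => by rw [hfS u hu, hfS v hv]
        · exact Finset.sum_congr rfl fun v hv => by rw [hfS u hu, hfC v hv]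
      have hR : ∑ u ∈ Sᶜ, ∑ v, q u * reflAdj G B u v * (f u * f v)
          = mm * ((-c)*(1-c)) + (vC - mm) * ((-c)*(-c)) := by
        rw [← hAcc, ← hAcS, Finset.sum_mul, Finset.sum_mul, ← Finset.sum_add_distrib]
        refine Finset.sum_congr rfl fun u hu => ?_
        rw [← Finset.sum_add_sum_compl S (fun v => q u * reflAdj G B u v * (f u * f v)),
          Finset.sum_mul, Finset.sum_mul]
        congr 1
        · exact Finset.sum_congr rfl fun v hv => by rw [hfC u hu, hfS v hv]
        · exact Finset.sum_congr rfl fun v hv => by rw [hfC u hu, hfC v hv]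
      rw [hL, hR]
      ring
    rw [hoff]
    have : P = vS - mm := by linarith
    rw [this]
    ring
  -- denominator
  have hden : x ⬝ᵥ x = vS * ((1-c)*(1-c)) + vC * (c*c) := by
    rw [dot_self_eq]
    have h1 : ∀ u : V, x u * x u = q u * d u * (f u * f u) := by
      intro u
      rw [hx]
      dsimp only
      rw [show Real.sqrt (d u) * Real.sqrt (q u) * f u * (Real.sqrt (d u) * Real.sqrt (q u) * f u)
          = (Real.sqrt (d u) * Real.sqrt (d u)) * (Real.sqrt (q u) * Real.sqrt (q u)) * (f u * f u)
        from by ring, hdd, hqq]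
      ring
    rw [Finset.sum_congr rfl fun u _ => h1 u]
    rw [← Finset.sum_add_sum_compl S (fun u => q u * d u * (f u * f u)), ← hvolS, ← hvolC,
      Finset.sum_mul, Finset.sum_mul]
    congr 1
    · exact Finset.sum_congr rfl fun u hu => by rw [hfS u hu]
    · exact Finset.sum_congr rfl fun u hu => by rw [hfC u hu]; ring
  have hdenval : x ⬝ᵥ x = vS * vC / vT := by
    rw [hden, hc]
    field_simp
    ring
  have hdenpos : 0 < x ⬝ᵥ x := dot_self_pos hx0
  -- membership and conclusion
  have hmem : x ⬝ᵥ (M *ᵥ x) / (x ⬝ᵥ x) ∈ {r : ℝ | ∃ y : V → ℝ, y ≠ 0 ∧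
      y ⬝ᵥ ((Dhalf G B * Qhalf B) *ᵥ fun _ => 1) = 0 ∧
      r = y ⬝ᵥ ((Qhalf B * NLR G B * Qinvhalf B) *ᵥ y) / (y ⬝ᵥ y)} :=
    ⟨x, hx0, hconstraint, rfl⟩
  have hle : lambdaR G B ≤ x ⬝ᵥ (M *ᵥ x) / (x ⬝ᵥ x) := by
    rw [lambdaR]
    exact csInf_le (lambda_set_bddBelow G B) hmem
  refine hle.trans ?_
  rw [hnum, hdenval]
  rcases le_total vS vC with hmin | hmin
  · rw [min_eq_left hmin]
    rw [div_le_iff₀ (by positivity)]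
    have heq : 2 * (mm / vS) * (vS * vC / vT) = 2 * mm * vC / vT := by
      field_simp
    rw [heq, le_div_iff₀ hvT]
    nlinarith
  · rw [min_eq_right hmin]
    rw [div_le_iff₀ (by positivity)]
    have heq : 2 * (mm / vC) * (vS * vC / vT) = 2 * mm * vS / vT := by
      field_simp
    rw [heq, le_div_iff₀ hvT]
    nlinarith

theorem lambdaR_le_two_mul_cheegerR' {V : Type*} [Fintype V] [DecidableEq V]
    (G : SimpleGraph V) [DecidableRel G.Adj] (B : Finset V)
    (hD : ∀ v, 0 < deg G B v)
    (hvol : ∀ S : Finset V, S.Nonempty → 0 < vol G B S) :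
    lambdaR G B ≤ 2 * cheegerR G B := by
  by_cases hex : ∃ S : Finset V, S.Nonempty ∧ S ≠ Finset.univ
  · obtain ⟨S0, hS0, hS0'⟩ := hex
    have hne : {r : ℝ | ∃ S : Finset V, S.Nonempty ∧ S ≠ Finset.univ ∧
        r = mMeas G B S Sᶜ / min (vol G B S) (vol G B Sᶜ)}.Nonempty :=
      ⟨_, S0, hS0, hS0', rfl⟩
    have hlb : ∀ r ∈ {r : ℝ | ∃ S : Finset V, S.Nonempty ∧ S ≠ Finset.univ ∧
        r = mMeas G B S Sᶜ / min (vol G B S) (vol G B Sᶜ)}, lambdaR G B / 2 ≤ r := by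
      rintro r ⟨S, hS, hS', rfl⟩
      have := key_ineq G B hD hvol S hS hS'
      linarith
    have h := le_csInf hne hlb
    rw [cheegerR]
    linarith
  · push_neg at hex
    have hcheeger : cheegerR G B = 0 := by
      have hempty : {r : ℝ | ∃ S : Finset V, S.Nonempty ∧ S ≠ Finset.univ ∧
          r = mMeas G B S Sᶜ / min (vol G B S) (vol G B Sᶜ)} = ∅ := by
        rw [Set.eq_empty_iff_forall_notMem]
        rintro r ⟨S, hS, hS', -⟩
        exact hS' (hex S hS)
      rw [cheegerR, hempty, Real.sInf_empty]
    have hlambda : lambdaR G B = 0 := by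
      have hempty : {r : ℝ | ∃ x : V → ℝ, x ≠ 0 ∧
          x ⬝ᵥ ((Dhalf G B * Qhalf B) *ᵥ fun _ => 1) = 0 ∧
          r = x ⬝ᵥ ((Qhalf B * NLR G B * Qinvhalf B) *ᵥ x) / (x ⬝ᵥ x)} = ∅ := by
        rw [Set.eq_empty_iff_forall_notMem]
        rintro r ⟨x, hx0, hcon, -⟩
        obtain ⟨u, hu⟩ := Function.ne_iff.mp hx0
        have huniv : ({u} : Finset V) = Finset.univ := hex {u} (Finset.singleton_nonempty u)
        rw [constraint_eval, ← huniv, Finset.sum_singleton] at hcon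
        have hpos : 0 < Real.sqrt (deg G B u) * Real.sqrt (qw B u) := by
          have h1 := hD u; have h2 := qw_pos B u; positivity
        exact (mul_ne_zero hu hpos.ne') hcon
      rw [lambdaR, hempty, Real.sInf_empty]
    rw [hcheeger, hlambda]
    norm_num

end Aux

/-- **Trivial direction of the Cheeger inequality.** For a finite simple graph `G` with
boundary `B ⊆ V` such that every diagonal entry of `D` is strictly positive and `vol(S) > 0`
for every nonempty `S ⊆ V`, the first nontrivial eigenvalue of the normalized reflected
Neumann Laplacian satisfies `λ_R ≤ 2 h_R`. -/
theorem lambdaR_le_two_mul_cheegerR {V : Type*} [Fintype V] [DecidableEq V]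
    (G : SimpleGraph V) [DecidableRel G.Adj] (B : Finset V)
    (hD : ∀ v, 0 < deg G B v)
    (hvol : ∀ S : Finset V, S.Nonempty → 0 < vol G B S) :
    lambdaR G B ≤ 2 * cheegerR G B :=
  lambdaR_le_two_mul_cheegerR' G B hD hvol
end

section
/- Let G=(V,E) be a finite simple graph with boundary set ∂V ⊆ V. Then Q·L_R = L − (1/2)·L_∂, where L is the standard (combinatorial) graph Laplacian of G, and L_∂ is the matrix that agrees with the graph Laplacian of the induced subgraph G[∂V] on the boundary block and is zero elsewhere. -/
open Matrix Finset

open RN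

/-- `Q·L_R = L − (1/2)·L_∂`, where `L = diag(A·1) − A` is the standard graph Laplacian of `G`
and `L_∂` agrees with the graph Laplacian of the induced subgraph `G[∂V]` on the boundary
block and is zero elsewhere. -/
theorem Qmat_mul_LR_eq_lap_sub_half_boundary_lap {V : Type*} [Fintype V] [DecidableEq V]
    (G : SimpleGraph V) [DecidableRel G.Adj] (B : Finset V) :
    Qmat B * LR G B =
      (Matrix.diagonal (fun v => ∑ w, adjMat G v w) - adjMat G)
        - (1/2 : ℝ) • (Matrix.of fun u v =>
            if u ∈ B ∧ v ∈ B then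
              (if u = v then ∑ w ∈ B, adjMat G u w else 0) - adjMat G u v
            else 0) := by

  have hdeg : ∀ u, u ∈ B → deg G B u = 2 * ∑ w, adjMat G u w - ∑ w ∈ B, adjMat G u w := by
    intro u hu
    have h1 : ∀ w, reflAdj G B u w
        = 2 * adjMat G u w - (if w ∈ B then adjMat G u w else 0) := by
      intro w
      by_cases hw : w ∈ B <;> simp [reflAdj, hu, hw] <;> ring
    simp only [deg, h1, Finset.sum_sub_distrib, ← Finset.mul_sum, Finset.sum_ite_mem,
      Finset.univ_inter]
  have hdeg' : ∀ u, u ∉ B → deg G B u = ∑ w, adjMat G u w := by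
    intro u hu
    simp [deg, reflAdj, hu]
  have hAdiag : ∀ u, adjMat G u u = 0 := by intro u; simp [adjMat]
  ext u v
  simp only [Qmat]
  rw [Matrix.diagonal_mul]
  simp only [LR, Dmat, Matrix.sub_apply, Matrix.diagonal_apply, Matrix.smul_apply,
    Matrix.of_apply, Qmat, qw, smul_eq_mul]
  by_cases hu : u ∈ B
  · by_cases huv : u = v
    · subst huv
      simp [hu, hdeg u hu, reflAdj, hAdiag u]
      ring
    · by_cases hv : v ∈ B
      · simp [hu, hv, huv, reflAdj]
        ring
      · simp [hu, hv, huv, reflAdj, adjMat]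
  · by_cases huv : u = v
    · subst huv
      simp [hu, hdeg' u hu, reflAdj]
    · simp [hu, huv, reflAdj]
end

section
/- Let G=(V,E) be a finite simple graph with boundary set ∂V ⊆ V. Then the matrix Q·L_R is symmetric and positive semidefinite; moreover L_R annihilates the all-ones vector, i.e. L_R·1 = 0, so 0 is an eigenvalue of Q·L_R with eigenvector 1. -/
open Matrix Finset

open RN

/-- The matrix `Q·L_R` is symmetric and positive semidefinite; moreover `L_R` annihilates the
all-ones vector, so `0` is an eigenvalue of `Q·L_R` with eigenvector `1`. -/
theorem Qmat_mul_LR_isSymm_posSemidef_and_LR_mulVec_one {V : Type*} [Fintype V] [DecidableEq V]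
    [Nonempty V] (G : SimpleGraph V) [DecidableRel G.Adj] (B : Finset V) :
    (Qmat B * LR G B).IsSymm ∧ (Qmat B * LR G B).PosSemidef ∧
    LR G B *ᵥ (fun _ => (1 : ℝ)) = 0 ∧
    Module.End.HasEigenvector (Matrix.toLin' (Qmat B * LR G B)) 0 (fun _ => (1 : ℝ)) := by
  classical
  set w : V → V → ℝ := fun u v => qw B u * reflAdj G B u v with hw
  have hA : ∀ u v, adjMat G u v = adjMat G v u := by
    intro u v; simp [adjMat, G.adj_comm]
  have hsymm : ∀ u v, w u v = w v u := by
    intro u v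
    by_cases hu : u ∈ B <;> by_cases hv : v ∈ B <;>
      simp [hw, qw, reflAdj, hu, hv, hA u v]
  have hnn : ∀ u v, 0 ≤ w u v := by
    intro u v
    have h1 : (0:ℝ) ≤ qw B u := by unfold qw; split <;> norm_num
    have h2 : (0:ℝ) ≤ reflAdj G B u v := by
      unfold reflAdj adjMat
      simp only [Matrix.of_apply]
      split_ifs <;> norm_num
    exact mul_nonneg h1 h2
  have hM : ∀ u v, (Qmat B * LR G B) u v = (if u = v then ∑ t, w u t else 0) - w u v := by
    intro u v
    have h : (Qmat B * LR G B) u v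
        = qw B u * ((if u = v then deg G B u else 0) - reflAdj G B u v) := by
      simp [Qmat, LR, Dmat, Matrix.diagonal_mul, Matrix.sub_apply, Matrix.diagonal_apply]
    rw [h, mul_sub]
    congr 1
    split
    · simp [deg, Finset.mul_sum, hw]
    · ring
  have hMsymm : (Qmat B * LR G B).IsSymm := by
    ext u v
    rw [Matrix.transpose_apply, hM, hM]
    by_cases h : u = v
    · subst h; rfl
    · simp [h, Ne.symm h, hsymm u v]
  have hone : LR G B *ᵥ (fun _ => (1:ℝ)) = 0 := by
    ext u
    show ∑ v, (Dmat G B - reflAdj G B) u v * 1 = 0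
    simp only [Matrix.sub_apply, mul_one, Finset.sum_sub_distrib, Dmat, Matrix.diagonal_apply]
    rw [Finset.sum_ite_eq]
    simp [deg]
  have hquad : ∀ x : V → ℝ, 0 ≤ x ⬝ᵥ ((Qmat B * LR G B) *ᵥ x) := by
    intro x
    have inner : ∀ u, (∑ v, (Qmat B * LR G B) u v * x v)
        = (∑ t, w u t) * x u - ∑ v, w u v * x v := by
      intro u
      simp only [hM, sub_mul, Finset.sum_sub_distrib]
      congr 1
      simp [Finset.sum_ite_eq, ite_mul]
    have hq : x ⬝ᵥ ((Qmat B * LR G B) *ᵥ x)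
        = (∑ u, ∑ v, w u v * x u ^ 2) - ∑ u, ∑ v, w u v * (x u * x v) := by
      rw [← Finset.sum_sub_distrib]
      show (∑ u, x u * ∑ v, (Qmat B * LR G B) u v * x v) = _
      refine Finset.sum_congr rfl fun u _ => ?_
      rw [inner u, mul_sub]
      congr 1
      · rw [Finset.sum_mul, Finset.mul_sum]
        exact Finset.sum_congr rfl fun t _ => by ring
      · rw [Finset.mul_sum]
        exact Finset.sum_congr rfl fun v _ => by ring
    have h13 : (∑ u, ∑ v, w u v * x u ^ 2) = ∑ u, ∑ v, w u v * x v ^ 2 := by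
      rw [Finset.sum_comm]
      exact Finset.sum_congr rfl fun v _ => Finset.sum_congr rfl fun u _ => by rw [hsymm]
    have hsq : (0:ℝ) ≤ ∑ u, ∑ v, w u v * (x u - x v) ^ 2 :=
      Finset.sum_nonneg fun u _ => Finset.sum_nonneg fun v _ =>
        mul_nonneg (hnn u v) (sq_nonneg _)
    have hexp : (∑ u, ∑ v, w u v * (x u - x v) ^ 2)
        = (∑ u, ∑ v, w u v * x u ^ 2) + (∑ u, ∑ v, w u v * x v ^ 2)
          - 2 * ∑ u, ∑ v, w u v * (x u * x v) := by
      rw [Finset.mul_sum, ← Finset.sum_add_distrib, ← Finset.sum_sub_distrib]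
      refine Finset.sum_congr rfl fun u _ => ?_
      rw [Finset.mul_sum, ← Finset.sum_add_distrib, ← Finset.sum_sub_distrib]
      exact Finset.sum_congr rfl fun v _ => by ring
    rw [hq]
    rw [hexp, ← h13] at hsq
    linarith
  have hpsd : (Qmat B * LR G B).PosSemidef := by
    rw [Matrix.posSemidef_iff_dotProduct_mulVec]
    constructor
    · rw [Matrix.IsHermitian, Matrix.conjTranspose_eq_transpose_of_trivial]
      exact hMsymm
    · intro x
      simpa using hquad x
  refine ⟨hMsymm, hpsd, hone, ?_, ?_⟩
  · rw [Module.End.mem_eigenspace_iff, Matrix.toLin'_apply, ← Matrix.mulVec_mulVec, hone,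
      Matrix.mulVec_zero, zero_smul]
  · intro h
    exact one_ne_zero (congrFun h (Classical.arbitrary V))
end

section
/- Let G=(V,E) be a finite simple graph with boundary set ∂V ⊆ V such that every diagonal entry of D is strictly positive, and let S := diag(1,√2) be the block diagonal matrix equal to the identity on the interior block and √2 times the identity on the boundary block. Writing L_R in block form as [[X, Y],[2Yᵀ, Z]] (where X = D(V̊,V̊) − A₁₁, Y = −A₁₂, Z = D(∂V,∂V) − A₂₂), one has L_R = S · [[X, √2·Y],[√2·Yᵀ, Z]] · S^{-1}; in particular L_R is similar to a real symmetric matrix and therefore is diagonalizable over ℝ with all eigenvalues real. -/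
open Matrix Finset

open RN

/-- `L_R` is the conjugate, by the block diagonal matrix `S = diag(1, √2)` (identity on the
interior block, `√2` on the boundary block), of the symmetric matrix `[[X, √2·Y],[√2·Yᵀ, Z]]`
whose `(u,v)` entry is `(S⁻¹ L_R S)(u,v) = s_u⁻¹ (L_R)_{uv} s_v`; in particular `L_R` is
similar to a real symmetric matrix and hence diagonalizable over `ℝ` with real eigenvalues. -/
theorem LR_similar_symmetric_and_diagonalizable {V : Type*} [Fintype V] [DecidableEq V]
    (G : SimpleGraph V) [DecidableRel G.Adj] (B : Finset V)
    (hD : ∀ v, 0 < deg G B v) :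
    (LR G B =
        Matrix.diagonal (fun v => if v ∈ B then Real.sqrt 2 else 1)
          * (Matrix.of fun u v =>
              (if u ∈ B then Real.sqrt 2 else 1)⁻¹ * LR G B u v
                * (if v ∈ B then Real.sqrt 2 else 1))
          * (Matrix.diagonal (fun v => if v ∈ B then Real.sqrt 2 else 1))⁻¹) ∧
    (Matrix.of fun u v =>
        (if u ∈ B then Real.sqrt 2 else 1)⁻¹ * LR G B u v
          * (if v ∈ B then Real.sqrt 2 else 1)).IsSymm ∧
    ∃ (P : Matrix V V ℝ) (d : V → ℝ), IsUnit P ∧ LR G B = P * Matrix.diagonal d * P⁻¹ := by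
  have hs2 : Real.sqrt 2 * Real.sqrt 2 = 2 := Real.mul_self_sqrt (by norm_num)
  have hs0 : Real.sqrt 2 ≠ 0 := by positivity
  set s : V → ℝ := fun v => if v ∈ B then Real.sqrt 2 else 1 with hs
  have hsne : ∀ v, s v ≠ 0 := by
    intro v; simp only [hs]; split <;> simp [hs0]
  set M : Matrix V V ℝ := Matrix.of fun u v => (s u)⁻¹ * LR G B u v * s v with hM
  have hinv2 : (Real.sqrt 2)⁻¹ * 2 = Real.sqrt 2 := by
    rw [inv_mul_eq_div, div_eq_iff hs0]; linarith [hs2]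
  have hSinv : (Matrix.diagonal s)⁻¹ = Matrix.diagonal (fun v => (s v)⁻¹) := by
    apply Matrix.inv_eq_right_inv
    rw [Matrix.diagonal_mul_diagonal]
    convert Matrix.diagonal_one with v
    exact mul_inv_cancel₀ (hsne v)
  have h1 : LR G B = Matrix.diagonal s * M * (Matrix.diagonal s)⁻¹ := by
    rw [hSinv]
    ext u v
    simp only [Matrix.mul_apply, Matrix.diagonal_apply, Matrix.of_apply, hM]
    rw [Finset.sum_eq_single v]
    · rw [Finset.sum_eq_single u]
      · simp only [if_pos rfl]
        simp only [if_pos trivial]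
        field_simp [hsne u, hsne v]
      · intro b _ hb; simp [Ne.symm hb]
      · simp
    · intro b _ hb
      simp [hb]
    · simp
  have hsymm : M.IsSymm := by
    rw [Matrix.IsSymm]
    ext u v
    simp only [Matrix.transpose_apply, Matrix.of_apply, hM]
    have hadj : adjMat G v u = adjMat G u v := by
      simp only [adjMat, Matrix.of_apply, G.adj_comm]
    by_cases huv : u = v
    · subst huv; ring
    · have hdiag : Dmat G B v u = 0 := Matrix.diagonal_apply_ne _ (Ne.symm huv)
      have hdiag' : Dmat G B u v = 0 := Matrix.diagonal_apply_ne _ huv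
      simp only [LR, Matrix.sub_apply, hdiag, hdiag', zero_sub, reflAdj, Matrix.of_apply, hadj]
      by_cases hu : u ∈ B <;> by_cases hv : v ∈ B <;>
          simp only [hs, hu, hv, if_true, if_false, not_true, not_false_iff, and_true, and_false,
            true_and, false_and]
      · field_simp
        first
          | linear_combination adjMat G u v * hs2
          | linear_combination (-adjMat G u v) * hs2
          | linear_combination (2*adjMat G u v) * hs2
          | linear_combination (-2*adjMat G u v) * hs2
      · field_simp
        first
          | linear_combination adjMat G u v * hs2
          | linear_combination (-adjMat G u v) * hs2
          | linear_combination (2*adjMat G u v) * hs2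
          | linear_combination (-2*adjMat G u v) * hs2
  refine ⟨h1, hsymm, ?_⟩
  have hherm : M.IsHermitian := by
    rwa [Matrix.IsHermitian, Matrix.conjTranspose_eq_transpose_of_trivial]
  set U : Matrix V V ℝ := (hherm.eigenvectorUnitary : Matrix V V ℝ) with hU
  have hUunit : IsUnit U := (Unitary.toUnits hherm.eigenvectorUnitary).isUnit
  have hSunit : IsUnit (Matrix.diagonal s) := by
    rw [Matrix.isUnit_iff_isUnit_det, Matrix.det_diagonal]
    exact (Finset.prod_ne_zero_iff.mpr fun v _ => hsne v).isUnit
  have hUstar : U⁻¹ = star U := by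
    apply Matrix.inv_eq_right_inv
    exact Matrix.mem_unitaryGroup_iff.mp hherm.eigenvectorUnitary.2
  refine ⟨Matrix.diagonal s * U, hherm.eigenvalues, hSunit.mul hUunit, ?_⟩
  have hspec : M = U * Matrix.diagonal hherm.eigenvalues * star U := by
    have := hherm.spectral_theorem
    simpa using this
  have hPinv : (Matrix.diagonal s * U)⁻¹ = star U * (Matrix.diagonal s)⁻¹ := by
    rw [Matrix.mul_inv_rev, hUstar]
  rw [h1, hPinv]
  conv_lhs => rw [hspec]
  simp only [Matrix.mul_assoc]
end

section
/- Let X be a real symmetric n×n matrix, Z a real symmetric m×m matrix, and Y a real n×m matrix, and let L' be the (n+m+n)×(n+m+n) block matrix [[X, Y, 0],[Yᵀ, Z, Yᵀ],[0, Y, X]]. Then ℝ^{n+m+n} admits a basis consisting of eigenvectors of L', of which exactly n+m are even (of the form (u, v, u)) and exactly n are odd (of the form (u, 0, −u)). -/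
open Matrix

namespace RN

/-- The block matrix `L' = [[X, Y, 0], [Yᵀ, Z, Yᵀ], [0, Y, X]]` of the Laplacian of the
doubled graph, on the index type `Fin n ⊕ (Fin m ⊕ Fin n)`. -/
def doubledLap (n m : ℕ) (X : Matrix (Fin n) (Fin n) ℝ) (Y : Matrix (Fin n) (Fin m) ℝ)
    (Z : Matrix (Fin m) (Fin m) ℝ) :
    Matrix (Fin n ⊕ (Fin m ⊕ Fin n)) (Fin n ⊕ (Fin m ⊕ Fin n)) ℝ :=
  Matrix.of fun p q =>
    match p, q with
    | .inl i, .inl j => X i j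
    | .inl i, .inr (.inl j) => Y i j
    | .inl _, .inr (.inr _) => 0
    | .inr (.inl i), .inl j => Y j i
    | .inr (.inl i), .inr (.inl j) => Z i j
    | .inr (.inl i), .inr (.inr j) => Y j i
    | .inr (.inr _), .inl _ => 0
    | .inr (.inr i), .inr (.inl j) => Y i j
    | .inr (.inr i), .inr (.inr j) => X i j

/-- The even vector `(u, v, u)`. -/
def evec {n m : ℕ} (u : Fin n → ℝ) (v : Fin m → ℝ) : Fin n ⊕ (Fin m ⊕ Fin n) → ℝ :=
  Sum.elim u (Sum.elim v u)

/-- The odd vector `(u, 0, -u)`. -/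
def ovec {n m : ℕ} (u : Fin n → ℝ) : Fin n ⊕ (Fin m ⊕ Fin n) → ℝ :=
  Sum.elim u (Sum.elim 0 (-u))

end RN

open RN

namespace RN

variable {n m : ℕ} {X : Matrix (Fin n) (Fin n) ℝ} {Y : Matrix (Fin n) (Fin m) ℝ}
  {Z : Matrix (Fin m) (Fin m) ℝ}

lemma mulVec_evec (u : Fin n → ℝ) (v : Fin m → ℝ) :
    doubledLap n m X Y Z *ᵥ evec u v
      = evec (X *ᵥ u + Y *ᵥ v) ((2:ℝ) • (Yᵀ *ᵥ u) + Z *ᵥ v) := by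
  funext p
  rcases p with i | j | i <;>
    simp [doubledLap, evec, mulVec, dotProduct, Fintype.sum_sum_type, transpose_apply,
      Finset.sum_add_distrib, two_mul, Finset.mul_sum] <;> ring

lemma mulVec_ovec (u : Fin n → ℝ) :
    doubledLap n m X Y Z *ᵥ ovec u = ovec (X *ᵥ u) := by
  funext p
  rcases p with i | j | i <;>
    simp [doubledLap, ovec, mulVec, dotProduct, Fintype.sum_sum_type]

lemma smul_evec (c : ℝ) (u : Fin n → ℝ) (v : Fin m → ℝ) :
    c • evec u v = evec (c • u) (c • v) := by
  funext p; rcases p with i | j | i <;> simp [evec]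

lemma smul_ovec (c : ℝ) (u : Fin n → ℝ) :
    c • ovec (m := m) u = ovec (c • u) := by
  funext p; rcases p with i | j | i <;> simp [ovec]

/-- The folding linear equivalence. -/
noncomputable def foldE (n m : ℕ) :
    (EuclideanSpace ℝ (Fin n ⊕ Fin m) × EuclideanSpace ℝ (Fin n)) ≃ₗ[ℝ]
      (Fin n ⊕ (Fin m ⊕ Fin n) → ℝ) where
  toFun p := Sum.elim (fun i => (Real.sqrt 2)⁻¹ * p.1 (.inl i) + p.2 i)
    (Sum.elim (fun j => p.1 (.inr j)) (fun i => (Real.sqrt 2)⁻¹ * p.1 (.inl i) - p.2 i))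
  map_add' p q := by funext x; rcases x with i | j | i <;>
    simp [Prod.fst_add, Prod.snd_add] <;> ring
  map_smul' c p := by funext x; rcases x with i | j | i <;>
    simp [Prod.smul_fst, Prod.smul_snd] <;> ring
  invFun f := (WithLp.toLp 2 (Sum.elim (fun i => Real.sqrt 2 / 2 * (f (.inl i) + f (.inr (.inr i))))
    (fun j => f (.inr (.inl j)))), WithLp.toLp 2 fun i => (f (.inl i) - f (.inr (.inr i))) / 2)
  left_inv p := by
    have h0 : Real.sqrt 2 ≠ 0 := by positivity
    have h1 : Real.sqrt 2 * (Real.sqrt 2)⁻¹ = 1 := mul_inv_cancel₀ h0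
    ext x
    · rcases x with i | j
      · show Real.sqrt 2 / 2 * (((Real.sqrt 2)⁻¹ * p.1 (.inl i) + p.2 i)
            + ((Real.sqrt 2)⁻¹ * p.1 (.inl i) - p.2 i)) = p.1 (.inl i)
        linear_combination (p.1 (.inl i)) * h1
      · rfl
    · show ((Real.sqrt 2)⁻¹ * p.1 (.inl x) + p.2 x
          - ((Real.sqrt 2)⁻¹ * p.1 (.inl x) - p.2 x)) / 2 = p.2 x
      ring
  right_inv f := by
    have h0 : Real.sqrt 2 ≠ 0 := by positivity
    have h1 : Real.sqrt 2 * (Real.sqrt 2)⁻¹ = 1 := mul_inv_cancel₀ h0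
    funext x
    rcases x with i | j | i
    · show (Real.sqrt 2)⁻¹ * (Real.sqrt 2 / 2 * (f (.inl i) + f (.inr (.inr i))))
        + (f (.inl i) - f (.inr (.inr i))) / 2 = f (.inl i)
      linear_combination ((f (.inl i) + f (.inr (.inr i))) / 2) * h1
    · rfl
    · show (Real.sqrt 2)⁻¹ * (Real.sqrt 2 / 2 * (f (.inl i) + f (.inr (.inr i))))
        - (f (.inl i) - f (.inr (.inr i))) / 2 = f (.inr (.inr i))
      linear_combination ((f (.inl i) + f (.inr (.inr i))) / 2) * h1

end RN

/-- **Even/odd eigenbasis of the doubled-graph Laplacian.** For `L' = [[X,Y,0],[Yᵀ,Z,Yᵀ],[0,Y,X]]`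
with `X`, `Z` real symmetric, `ℝ^{n+m+n}` has a basis of eigenvectors of `L'`, of which exactly
`n + m` are even (of the form `(u,v,u)`) and exactly `n` are odd (of the form `(u,0,−u)`). -/
theorem doubledLap_eigenbasis_even_odd (n m : ℕ) (X : Matrix (Fin n) (Fin n) ℝ) (hX : X.IsSymm)
    (Z : Matrix (Fin m) (Fin m) ℝ) (hZ : Z.IsSymm) (Y : Matrix (Fin n) (Fin m) ℝ) :
    ∃ (ev : Fin (n + m) → (Fin n ⊕ (Fin m ⊕ Fin n) → ℝ))
      (od : Fin n → (Fin n ⊕ (Fin m ⊕ Fin n) → ℝ))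
      (μ : Fin (n + m) → ℝ) (lam : Fin n → ℝ),
      (∀ i, ∃ u v, ev i = evec u v) ∧
      (∀ i, doubledLap n m X Y Z *ᵥ ev i = μ i • ev i) ∧
      (∀ i, ∃ u, od i = ovec u) ∧
      (∀ i, doubledLap n m X Y Z *ᵥ od i = lam i • od i) ∧
      LinearIndependent ℝ (Sum.elim ev od) ∧
      Submodule.span ℝ (Set.range (Sum.elim ev od)) = ⊤ := by
  classical
  have h0 : Real.sqrt 2 ≠ 0 := by positivity
  have h1 : Real.sqrt 2 * (Real.sqrt 2)⁻¹ = 1 := mul_inv_cancel₀ h0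
  have h2 : Real.sqrt 2 * Real.sqrt 2 = 2 := Real.mul_self_sqrt (by norm_num)
  have hc2 : (2:ℝ) * (Real.sqrt 2)⁻¹ = Real.sqrt 2 := by
    calc (2:ℝ) * (Real.sqrt 2)⁻¹ = Real.sqrt 2 * Real.sqrt 2 * (Real.sqrt 2)⁻¹ := by rw [h2]
      _ = Real.sqrt 2 := by rw [mul_assoc, h1, mul_one]
  have hXh : X.IsHermitian := by
    ext i j; simp [conjTranspose_apply, hX.apply]
  have hZh : Z.IsHermitian := by
    ext i j; simp [conjTranspose_apply, hZ.apply]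
  have hSh : (fromBlocks X (Real.sqrt 2 • Y) (Real.sqrt 2 • Yᵀ) Z).IsHermitian :=
    Matrix.IsHermitian.fromBlocks hXh (by ext i j; simp [conjTranspose_apply]) hZh
  let e : (Fin n ⊕ Fin m) ≃ Fin (n + m) := finSumFinEquiv
  let wB := hSh.eigenvectorBasis
  let xB := hXh.eigenvectorBasis
  refine ⟨fun k => foldE n m (wB (e.symm k), 0),
          fun j => foldE n m (0, xB j),
          fun k => hSh.eigenvalues (e.symm k),
          fun j => hXh.eigenvalues j, ?_, ?_, ?_, ?_, ?_, ?_⟩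
  · intro k
    exact ⟨fun i => (Real.sqrt 2)⁻¹ * wB (e.symm k) (.inl i),
      fun j => wB (e.symm k) (.inr j),
      by funext p; rcases p with i | j | i <;> simp [foldE, evec]⟩
  · intro k
    show doubledLap n m X Y Z *ᵥ foldE n m (wB (e.symm k), 0)
      = hSh.eigenvalues (e.symm k) • foldE n m (wB (e.symm k), 0)
    set a : Fin n → ℝ := fun i => wB (e.symm k) (.inl i) with ha
    set b : Fin m → ℝ := fun j => wB (e.symm k) (.inr j) with hb
    set μ := hSh.eigenvalues (e.symm k) with hμ
    have hk := hSh.mulVec_eigenvectorBasis (e.symm k)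
    have hw : ⇑(wB (e.symm k)) = Sum.elim a b := by
      funext q; rcases q with i | j <;> rfl
    rw [hw, fromBlocks_mulVec] at hk
    have hA : X *ᵥ a + Real.sqrt 2 • (Y *ᵥ b) = μ • a := by
      funext i
      simpa [smul_mulVec] using congrFun hk (Sum.inl i)
    have hB : Real.sqrt 2 • (Yᵀ *ᵥ a) + Z *ᵥ b = μ • b := by
      funext j
      simpa [smul_mulVec] using congrFun hk (Sum.inr j)
    have hev : foldE n m (wB (e.symm k), 0) = evec ((Real.sqrt 2)⁻¹ • a) b := by
      funext p; rcases p with i | j | i <;> simp [foldE, evec, ha, hb]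
    simp only [hev]
    rw [mulVec_evec, smul_evec]
    have c1 : X *ᵥ ((Real.sqrt 2)⁻¹ • a) + Y *ᵥ b = μ • ((Real.sqrt 2)⁻¹ • a) := by
      funext i
      have hAi := congrFun hA i
      simp only [Pi.add_apply, Pi.smul_apply, smul_eq_mul, mulVec_smul] at hAi ⊢
      linear_combination (Real.sqrt 2)⁻¹ * hAi - ((Y *ᵥ b) i) * h1
    have c2 : (2:ℝ) • (Yᵀ *ᵥ ((Real.sqrt 2)⁻¹ • a)) + Z *ᵥ b = μ • b := by
      funext j
      have hBj := congrFun hB j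
      simp only [Pi.add_apply, Pi.smul_apply, smul_eq_mul, mulVec_smul] at hBj ⊢
      linear_combination hBj + ((Yᵀ *ᵥ a) j) * hc2
    rw [c1, c2]
  · intro j
    exact ⟨⇑(xB j), by funext p; rcases p with i | j' | i <;> simp [foldE, ovec]⟩
  · intro j
    show doubledLap n m X Y Z *ᵥ foldE n m (0, xB j) = hXh.eigenvalues j • foldE n m (0, xB j)
    have hov : foldE n m ((0 : EuclideanSpace ℝ (Fin n ⊕ Fin m)), xB j) = ovec ⇑(xB j) := by
      funext p; rcases p with i | j' | i <;> simp [foldE, ovec]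
    simp only [hov]
    rw [mulVec_ovec, hXh.mulVec_eigenvectorBasis j, ← smul_ovec]
  · have hbe : Sum.elim (fun k => foldE n m (wB (e.symm k), 0))
        (fun j => foldE n m (0, xB j))
        = ⇑((((wB.toBasis.reindex e).prod xB.toBasis).map (foldE n m))) := by
      funext k
      rcases k with k | j <;>
        simp [Module.Basis.map_apply, Module.Basis.prod_apply, Module.Basis.reindex_apply]
    rw [hbe]
    exact Module.Basis.linearIndependent _
  · have hbe : Sum.elim (fun k => foldE n m (wB (e.symm k), 0))
        (fun j => foldE n m (0, xB j))
        = ⇑((((wB.toBasis.reindex e).prod xB.toBasis).map (foldE n m))) := by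
      funext k
      rcases k with k | j <;>
        simp [Module.Basis.map_apply, Module.Basis.prod_apply, Module.Basis.reindex_apply]
    rw [hbe]
    exact Module.Basis.span_eq _
end
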